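/- arXiv:math/0609146 — 3 statements merged into one kernel-verified Lean document; each statement's English description precedes it below -/
import Mathlib

section
/- Let ρ: R → S and ι: S → R be ring homomorphisms with ρ ∘ ι = id_S. Let M be a left R-module, L a left S-module, and let α⁺: M → L and α⁻: L → M be additive maps with α⁺ ∘ α⁻ = id_L, such that α⁺ is an R-module homomorphism (L regarded as an R-module via ρ) and α⁻ is an S-module homomorphism (M regarded as an S-module via ι). If M is of type FP_n as a left R-module, then L is of type FP_n as a left S-module. -/
open Function LinearMap TensorProduct MulOpposite

/-- A left `R`-module `M` is of type `FP n`: there is an exact sequence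
`0 ← M ← P₀ ← P₁ ← ⋯ ← Pₙ` with each `Pᵢ` a finitely generated free left `R`-module
(wlog `Pᵢ = Fin rᵢ → R`). -/
def IsFP (R : Type*) [Ring R] (M : Type*) [AddCommGroup M] [Module R M] (n : ℕ) : Prop :=
  ∃ (r : ℕ → ℕ) (d : ∀ i : ℕ, (Fin (r (i + 1)) → R) →ₗ[R] (Fin (r i) → R))
    (e : (Fin (r 0) → R) →ₗ[R] M),
    Function.Surjective e ∧
    (0 < n → LinearMap.ker e = LinearMap.range (d 0)) ∧
    ∀ i : ℕ, i + 1 < n → LinearMap.ker (d i) = LinearMap.range (d (i + 1))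

/-- Left `FP n` of a ring `R` augmented by `ε : R →+* K`:
`K` is a left `R`-module via `ε`, required to be of type `FP n`. -/
def LeftFP {K : Type*} [CommRing K] (R : Type*) [Ring R] (ε : R →+* K) (n : ℕ) : Prop :=
  letI : Module R K := Module.compHom K ε
  IsFP R K n

/-- Right `FP n`: right `R`-modules are left `Rᵐᵒᵖ`-modules. -/
def RightFP {K : Type*} [CommRing K] (R : Type*) [Ring R] (ε : R →+* K) (n : ℕ) : Prop :=
  LeftFP Rᵐᵒᵖ (ε.fromOpposite fun _ _ => mul_comm _ _) n

/-- Left multiplication by `a` on the first factor of `A ⊗[K] A`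
(the free `(A,A)`-bimodule of rank one). -/
noncomputable def lmulT (K A : Type*) [CommRing K] [Ring A] [Algebra K A] (a : A) :
    (A ⊗[K] A) →ₗ[K] A ⊗[K] A := LinearMap.rTensor A (LinearMap.mulLeft K a)

/-- Right multiplication by `b` on the second factor of `A ⊗[K] A`. -/
noncomputable def rmulT (K A : Type*) [CommRing K] [Ring A] [Algebra K A] (b : A) :
    (A ⊗[K] A) →ₗ[K] A ⊗[K] A := LinearMap.lTensor A (LinearMap.mulRight K b)

/-- An `(A,A)`-bimodule, presented as a `K`-module `M` together with commuting left/right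
multiplication operators `lact, ract`, is of type `bi-FP n`: there is an exact sequence
`0 ← M ← F₀ ← ⋯ ← Fₙ` of `(A,A)`-bimodules where each `Fᵢ` is a finitely generated free
bimodule (wlog `Fᵢ = Fin rᵢ → A ⊗[K] A`) and the maps are bimodule maps, i.e. `K`-linear maps
commuting with the two-sided `A`-actions. -/
def IsBiFP (K A : Type*) [CommRing K] [Ring A] [Algebra K A]
    (M : Type*) [AddCommGroup M] [Module K M]
    (lact ract : A → M →ₗ[K] M) (n : ℕ) : Prop :=
  ∃ (r : ℕ → ℕ)
    (d : ∀ i : ℕ, (Fin (r (i + 1)) → A ⊗[K] A) →ₗ[K] (Fin (r i) → A ⊗[K] A))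
    (e : (Fin (r 0) → A ⊗[K] A) →ₗ[K] M),
    (∀ (i : ℕ) (a : A), d i ∘ₗ (lmulT K A a).compLeft (Fin (r (i + 1))) =
        (lmulT K A a).compLeft (Fin (r i)) ∘ₗ d i) ∧
    (∀ (i : ℕ) (b : A), d i ∘ₗ (rmulT K A b).compLeft (Fin (r (i + 1))) =
        (rmulT K A b).compLeft (Fin (r i)) ∘ₗ d i) ∧
    (∀ a : A, e ∘ₗ (lmulT K A a).compLeft (Fin (r 0)) = lact a ∘ₗ e) ∧
    (∀ b : A, e ∘ₗ (rmulT K A b).compLeft (Fin (r 0)) = ract b ∘ₗ e) ∧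
    Function.Surjective e ∧
    (0 < n → LinearMap.ker e = LinearMap.range (d 0)) ∧
    ∀ i : ℕ, i + 1 < n → LinearMap.ker (d i) = LinearMap.range (d (i + 1))

/-- `A` is of type `bi-FP n`: the bimodule `A` (by left and right multiplication)
admits a resolution by finitely generated free bimodules. -/
def BiFP (K A : Type*) [CommRing K] [Ring A] [Algebra K A] (n : ℕ) : Prop :=
  IsBiFP K A A (fun a => LinearMap.mulLeft K a) (fun b => LinearMap.mulRight K b) n

/-- `A` (augmented by `ε`) is of type weak `bi-FP n`: the bimodule `K`
(with action `a·k·a' = ε(a) k ε(a')`) admits a resolution by f.g. free bimodules. -/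
def WeakBiFP (K A : Type*) [CommRing K] [Ring A] [Algebra K A] (ε : A →ₐ[K] K) (n : ℕ) :
    Prop :=
  IsBiFP K A K (fun a => ε a • LinearMap.id) (fun b => ε b • LinearMap.id) n

/-- The standard augmentation of a monoid algebra, `b ↦ 1` for `b ∈ B`. -/
noncomputable def aug (K B : Type*) [CommRing K] [Monoid B] : MonoidAlgebra K B →ₐ[K] K :=
  MonoidAlgebra.lift K K B 1

namespace RetrFP

section lmap
variable {T : Type*} [Ring T] {N : Type*} [AddCommGroup N] [Module T N] {k : ℕ}

def lmap (v : Fin k → N) : (Fin k → T) →ₗ[T] N where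
  toFun x := ∑ j, x j • v j
  map_add' x y := by simp [add_smul, Finset.sum_add_distrib]
  map_smul' t x := by simp [Finset.smul_sum, mul_smul]

lemma lmap_apply (v : Fin k → N) (x : Fin k → T) : lmap v x = ∑ j, x j • v j := rfl

lemma lmap_single (v : Fin k → N) (j : Fin k) : lmap v (Pi.single j (1 : T)) = v j := by
  simp [lmap_apply, Pi.single_apply, ite_smul]

lemma apply_eq_sum (f : (Fin k → T) →ₗ[T] N) (x : Fin k → T) :
    f x = ∑ j, x j • f (Pi.single j (1 : T)) := by
  conv_lhs => rw [← Finset.univ_sum_single x]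
  rw [map_sum]
  refine Finset.sum_congr rfl fun j _ => ?_
  rw [← map_smul, ← Pi.single_smul, smul_eq_mul, mul_one]

end lmap

/-- A retractive pair. -/
def Retr (R S : Type*) [Ring R] [Ring S] (ρ : R →+* S) (ι : S →+* R)
    (M : Type*) [AddCommGroup M] [Module R M]
    (L : Type*) [AddCommGroup L] [Module S L] : Prop :=
  ∃ (αp : M →+ L) (αm : L →+ M),
    (∀ l, αp (αm l) = l) ∧ (∀ (r : R) (m : M), αp (r • m) = ρ r • αp m) ∧
    (∀ (s : S) (l : L), αm (s • l) = ι s • αm l)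

variable {R S : Type*} [Ring R] [Ring S]
variable {M : Type*} [AddCommGroup M] [Module R M] {L : Type*} [AddCommGroup L] [Module S L]

section pair
variable (ρ : R →+* S) (ι : S →+* R)
variable (αp : M →+ L) (αm : L →+ M)

lemma eprime_surjective (hretr : ∀ l, αp (αm l) = l)
    (hαp : ∀ (r : R) (m : M), αp (r • m) = ρ r • αp m)
    {a : ℕ} (e : (Fin a → R) →ₗ[R] M) (he : Function.Surjective e) :
    Function.Surjective (lmap (fun j => αp (e (Pi.single j (1 : R)))) : (Fin a → S) →ₗ[S] L) := by
  intro l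
  obtain ⟨x, hx⟩ := he (αm l)
  refine ⟨fun j => ρ (x j), ?_⟩
  calc (lmap (fun j => αp (e (Pi.single j (1 : R)))) : (Fin a → S) →ₗ[S] L) (fun j => ρ (x j))
      = ∑ j, ρ (x j) • αp (e (Pi.single j (1 : R))) := lmap_apply _ _
    _ = ∑ j, αp (x j • e (Pi.single j (1 : R))) := by simp_rw [hαp]
    _ = αp (∑ j, x j • e (Pi.single j (1 : R))) := (map_sum αp _ _).symm
    _ = αp (e x) := by rw [← apply_eq_sum]
    _ = l := by rw [hx, hretr]

/-- The key construction: an enlarged surjection `eh` onto `M` and the surjection `e'` onto `L`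
whose kernels form a retractive pair. -/
lemma buildPair (hρι : ρ.comp ι = RingHom.id S)
    (hretr : ∀ l, αp (αm l) = l)
    (hαp : ∀ (r : R) (m : M), αp (r • m) = ρ r • αp m)
    (hαm : ∀ (s : S) (l : L), αm (s • l) = ι s • αm l)
    {a : ℕ} (e : (Fin a → R) →ₗ[R] M) (he : Function.Surjective e) :
    ∃ (eh : (Fin (a + a) → R) →ₗ[R] M) (e' : (Fin a → S) →ₗ[S] L),
      Function.Surjective eh ∧ Function.Surjective e' ∧
      Retr R S ρ ι (LinearMap.ker eh) (LinearMap.ker e') := by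
  have hρι' : ∀ s, ρ (ι s) = s := fun s => RingHom.congr_fun hρι s
  set v : Fin a → L := fun j => αp (e (Pi.single j (1 : R))) with hv
  set e' : (Fin a → S) →ₗ[S] L := lmap v with he'def
  have he' : Function.Surjective e' := eprime_surjective ρ αp αm hretr hαp e he
  set c : Fin (a + a) → M :=
    Fin.append (fun j => e (Pi.single j (1 : R))) (fun j => αm (v j)) with hc
  set eh : (Fin (a + a) → R) →ₗ[R] M := lmap c with hehdef
  have hehx : ∀ x, eh x = ∑ i, x i • c i := fun x => lmap_apply _ _
  have heh : Function.Surjective eh := by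
    intro m0
    obtain ⟨x, hx⟩ := he m0
    refine ⟨Fin.append x 0, ?_⟩
    rw [hehx, Fin.sum_univ_add]
    simp only [Fin.append_left, Fin.append_right, Pi.zero_apply, zero_smul,
      Finset.sum_const_zero, add_zero, hc]
    rw [← apply_eq_sum, hx]
  -- the retraction data between the kernels
  choose w hw using fun kk => he' (v kk)
  set P : (Fin (a + a) → R) → (Fin a → S) :=
    fun x => (fun j => ρ (x (Fin.natAdd a j))) + ∑ kk, ρ (x (Fin.castAdd a kk)) • w kk with hP
  set Q : (Fin a → S) → (Fin (a + a) → R) :=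
    fun y => Fin.append 0 (fun j => ι (y j)) with hQ
  have key1 : ∀ x, e' (P x) = αp (eh x) := by
    intro x
    have l1 : e' (P x) = (∑ j, ρ (x (Fin.natAdd a j)) • v j)
        + ∑ kk, ρ (x (Fin.castAdd a kk)) • v kk := by
      rw [hP]
      simp only [map_add, map_sum, map_smul]
      rw [he'def, lmap_apply]
      simp_rw [← he'def, hw]
    have l2 : αp (eh x) = (∑ kk, ρ (x (Fin.castAdd a kk)) • v kk)
        + ∑ j, ρ (x (Fin.natAdd a j)) • v j := by
      rw [hehx, map_sum, Fin.sum_univ_add]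
      congr 1
      · refine Finset.sum_congr rfl fun kk _ => ?_
        rw [hc, Fin.append_left, hαp]
      · refine Finset.sum_congr rfl fun j _ => ?_
        rw [hc, Fin.append_right, hαp, hretr]
    rw [l1, l2, add_comm]
  have key2 : ∀ y, eh (Q y) = αm (e' y) := by
    intro y
    rw [hehx, Fin.sum_univ_add]
    simp only [hQ, Fin.append_left, Fin.append_right, Pi.zero_apply, zero_smul,
      Finset.sum_const_zero, zero_add]
    rw [he'def, lmap_apply, map_sum]
    refine Finset.sum_congr rfl fun j _ => ?_
    rw [hαm, hc, Fin.append_right]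
  have key3 : ∀ y, P (Q y) = y := by
    intro y
    rw [hP]
    simp only [hQ, Fin.append_left, Fin.append_right, Pi.zero_apply, map_zero, zero_smul,
      Finset.sum_const_zero, hρι']
    funext j
    simp
  have Padd : ∀ x x', P (x + x') = P x + P x' := by
    intro x x'
    rw [hP]
    simp only [Pi.add_apply, map_add, add_smul, Finset.sum_add_distrib]
    funext j
    simp only [Pi.add_apply]
    abel
  have Psmul : ∀ (t : R) x, P (t • x) = ρ t • P x := by
    intro t x
    rw [hP]
    simp only [Pi.smul_apply, smul_eq_mul, map_mul, smul_add, Finset.smul_sum, mul_smul]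
    funext j
    simp [mul_smul]
  have Qadd : ∀ y y', Q (y + y') = Q y + Q y' := by
    intro y y'
    funext i
    show Fin.append (0 : Fin a → R) (fun j => ι ((y + y') j)) i
        = Fin.append (0 : Fin a → R) (fun j => ι (y j)) i
          + Fin.append (0 : Fin a → R) (fun j => ι (y' j)) i
    refine Fin.addCases (fun kk => ?_) (fun j => ?_) i
    · rw [Fin.append_left, Fin.append_left, Fin.append_left]; simp
    · rw [Fin.append_right, Fin.append_right, Fin.append_right]; simp
  have Qsmul : ∀ (s : S) y, Q (s • y) = ι s • Q y := by
    intro s y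
    funext i
    show Fin.append (0 : Fin a → R) (fun j => ι ((s • y) j)) i
        = ι s * Fin.append (0 : Fin a → R) (fun j => ι (y j)) i
    refine Fin.addCases (fun kk => ?_) (fun j => ?_) i
    · rw [Fin.append_left, Fin.append_left]; simp
    · rw [Fin.append_right, Fin.append_right]; simp
  refine ⟨eh, e', heh, he', ?_⟩
  refine ⟨AddMonoidHom.mk' (fun x => ⟨P x.1, ?_⟩) ?_, AddMonoidHom.mk' (fun y => ⟨Q y.1, ?_⟩) ?_,
    ?_, ?_, ?_⟩
  · rw [LinearMap.mem_ker, key1, (LinearMap.mem_ker.mp x.2 : eh x.1 = 0), map_zero]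
  · intro x x'; exact Subtype.ext (Padd _ _)
  · rw [LinearMap.mem_ker, key2, (LinearMap.mem_ker.mp y.2 : e' y.1 = 0), map_zero]
  · intro y y'; exact Subtype.ext (Qadd _ _)
  · intro l; exact Subtype.ext (key3 _)
  · intro t x; exact Subtype.ext (Psmul t x.1)
  · intro s y; exact Subtype.ext (Qsmul s y.1)

end pair

lemma base (ρ : R →+* S) (ι : S →+* R) (hret : Retr R S ρ ι M L) (h : IsFP R M 0) :
    IsFP S L 0 := by
  obtain ⟨αp, αm, hretr, hαp, hαm⟩ := hret
  obtain ⟨r, d, e, he, -, -⟩ := h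
  exact ⟨r, fun i => 0, lmap (fun j => αp (e (Pi.single j (1 : R)))),
    eprime_surjective ρ αp αm hretr hαp e he,
    fun hn => absurd hn (lt_irrefl 0), fun i hi => absurd hi (Nat.not_lt_zero _)⟩

lemma prepend {g : ℕ} {e' : (Fin g → S) →ₗ[S] L} (he' : Function.Surjective e') {m : ℕ}
    (hK : IsFP S (LinearMap.ker e') m) : IsFP S L (m + 1) := by
  obtain ⟨r, d, ε, hε, h1, h2⟩ := hK
  refine ⟨fun i => match i with | 0 => g | (i+1) => r i,
    fun i => match i with
      | 0 => (LinearMap.ker e').subtype ∘ₗ ε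
      | (i+1) => d i,
    e', he', ?_, ?_⟩
  · intro _
    show LinearMap.ker e' = LinearMap.range ((LinearMap.ker e').subtype ∘ₗ ε)
    rw [LinearMap.range_comp, LinearMap.range_eq_top.mpr hε, Submodule.map_top,
      Submodule.range_subtype]
  · intro i hi
    match i with
    | 0 =>
      show LinearMap.ker ((LinearMap.ker e').subtype ∘ₗ ε) = LinearMap.range (d 0)
      rw [LinearMap.ker_comp, Submodule.ker_subtype, ← LinearMap.ker]
      exact h1 (Nat.lt_of_succ_lt_succ hi)
    | (i+1) =>
      exact h2 i (Nat.lt_of_succ_lt_succ hi)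

lemma shift {m : ℕ} {r : ℕ → ℕ}
    (d : ∀ i : ℕ, (Fin (r (i + 1)) → R) →ₗ[R] (Fin (r i) → R))
    (e : (Fin (r 0) → R) →ₗ[R] M)
    (hke : LinearMap.ker e = LinearMap.range (d 0))
    (hkd : ∀ i : ℕ, i + 1 < m + 1 → LinearMap.ker (d i) = LinearMap.range (d (i + 1))) :
    IsFP R (LinearMap.ker e) m := by
  refine ⟨fun i => r (i + 1), fun i => d (i + 1),
    LinearMap.codRestrict _ (d 0) (fun x => by rw [hke]; exact ⟨x, rfl⟩), ?_, ?_, ?_⟩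
  · rintro ⟨y, hy⟩
    rw [hke] at hy
    obtain ⟨x, hx⟩ := hy
    exact ⟨x, Subtype.ext hx⟩
  · intro hm
    rw [LinearMap.ker_codRestrict]
    exact hkd 0 (Nat.succ_lt_succ hm)
  · intro i hi
    exact hkd (i + 1) (Nat.succ_lt_succ hi)

lemma addFree {K : Type*} [AddCommGroup K] [Module R K] {m : ℕ} (hK : IsFP R K m) (k : ℕ) :
    IsFP R (K × (Fin k → R)) m := by
  obtain ⟨r, d, ε, hε, h1, h2⟩ := hK
  let Ψ : (Fin (r 0 + k) → R) ≃ₗ[R] (Fin (r 0) → R) × (Fin k → R) :=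
    (LinearEquiv.funCongrLeft R R finSumFinEquiv).trans
      (LinearEquiv.sumArrowLequivProdArrow _ _ R R)
  refine ⟨fun i => match i with | 0 => r 0 + k | (i+1) => r (i+1),
    fun i => match i with
      | 0 => Ψ.symm.toLinearMap ∘ₗ (LinearMap.inl R _ _) ∘ₗ (d 0)
      | (i+1) => d (i+1),
    (ε.prodMap LinearMap.id) ∘ₗ Ψ.toLinearMap, ?_, ?_, ?_⟩
  · rintro ⟨y, z⟩
    obtain ⟨x, hx⟩ := hε y
    exact ⟨Ψ.symm (x, z), by simp [LinearMap.prodMap_apply, hx]⟩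
  · intro hm
    have h1' := h1 hm
    show LinearMap.ker ((ε.prodMap LinearMap.id) ∘ₗ Ψ.toLinearMap)
        = LinearMap.range (Ψ.symm.toLinearMap ∘ₗ (LinearMap.inl R _ _) ∘ₗ (d 0))
    ext x
    simp only [LinearMap.mem_ker, LinearMap.mem_range, LinearMap.comp_apply,
      LinearEquiv.coe_coe, LinearMap.prodMap_apply, LinearMap.id_apply, Prod.mk_eq_zero,
      LinearMap.inl_apply]
    constructor
    · rintro ⟨hx1, hx2⟩
      have : (Ψ x).1 ∈ LinearMap.range (d 0) := by rw [← h1']; exact hx1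
      obtain ⟨w, hw⟩ := this
      refine ⟨w, ?_⟩
      rw [hw]
      apply Ψ.injective
      rw [LinearEquiv.apply_symm_apply]
      exact (Prod.ext rfl hx2.symm : ((Ψ x).1, (0:Fin k → R)) = Ψ x)
    · rintro ⟨w, rfl⟩
      rw [LinearEquiv.apply_symm_apply]
      have : d 0 w ∈ LinearMap.ker ε := by rw [h1']; exact ⟨w, rfl⟩
      exact ⟨this, rfl⟩
  · intro i hi
    match i with
    | 0 =>
      have h2' := h2 0 hi
      show LinearMap.ker (Ψ.symm.toLinearMap ∘ₗ (LinearMap.inl R _ _) ∘ₗ (d 0))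
          = LinearMap.range (d 1)
      ext x
      simp only [LinearMap.mem_ker, LinearMap.comp_apply, LinearEquiv.coe_coe,
        LinearMap.inl_apply]
      rw [show (0 : Fin (r 0 + k) → R) = Ψ.symm 0 by simp, (Ψ.symm.injective.eq_iff),
        Prod.mk_eq_zero]
      constructor
      · rintro ⟨hx, -⟩
        rw [← LinearMap.mem_ker, h2'] at hx
        exact hx
      · intro hx
        have : d 0 x = 0 := by rw [← LinearMap.mem_ker, h2']; exact hx
        exact ⟨this, rfl⟩
    | (i+1) =>
      exact h2 (i+1) hi

lemma schanuelRetract {a b : ℕ}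
    (e : (Fin a → R) →ₗ[R] M) (he : Function.Surjective e)
    (eh : (Fin b → R) →ₗ[R] M) (heh : Function.Surjective eh) :
    Retr R R (RingHom.id R) (RingHom.id R)
      ((LinearMap.ker e) × (Fin b → R)) (LinearMap.ker eh) := by
  choose z hz using fun j => he (eh (Pi.single j (1 : R)))
  choose w hw using fun kk => heh (e (Pi.single kk (1 : R)))
  set lam : (Fin b → R) →ₗ[R] (Fin a → R) := lmap z with hlamdef
  set mu : (Fin a → R) →ₗ[R] (Fin b → R) := lmap w with hmudef
  have hlam : ∀ x, e (lam x) = eh x := by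
    intro x
    rw [hlamdef, lmap_apply, map_sum]
    simp_rw [map_smul, hz]
    exact (apply_eq_sum eh x).symm
  have hmu : ∀ y, eh (mu y) = e y := by
    intro y
    rw [hmudef, lmap_apply, map_sum]
    simp_rw [map_smul, hw]
    exact (apply_eq_sum e y).symm
  set F : ((LinearMap.ker e) × (Fin b → R)) →ₗ[R] (Fin b → R) :=
    LinearMap.snd R _ _ - mu ∘ₗ ((LinearMap.ker e).subtype ∘ₗ LinearMap.fst R _ _
      + lam ∘ₗ LinearMap.snd R _ _) with hFdef
  have hFval : ∀ p : (LinearMap.ker e) × (Fin b → R), F p = p.2 - mu ((p.1 : Fin a → R) + lam p.2) :=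
    fun p => rfl
  have hFk : ∀ p, F p ∈ LinearMap.ker eh := by
    intro p
    rw [LinearMap.mem_ker, hFval, map_sub, hmu, map_add, (LinearMap.mem_ker.mp p.1.2), zero_add,
      hlam, sub_self]
  set G : (LinearMap.ker eh) →ₗ[R] ((LinearMap.ker e) × (Fin b → R)) :=
    LinearMap.prod
      (LinearMap.codRestrict _ (-(lam ∘ₗ (LinearMap.ker eh).subtype))
        (fun x => by
          rw [LinearMap.mem_ker, LinearMap.neg_apply, map_neg, LinearMap.comp_apply, hlam,
            Submodule.coe_subtype, (LinearMap.mem_ker.mp x.2), neg_zero]))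
      (LinearMap.ker eh).subtype with hGdef
  refine ⟨(LinearMap.codRestrict _ F hFk).toAddMonoidHom, G.toAddMonoidHom, ?_, ?_, ?_⟩
  · intro l
    apply Subtype.ext
    show F (G l) = (l : Fin b → R)
    rw [hFval]
    have h1 : (G l).2 = (l : Fin b → R) := rfl
    have h2 : ((G l).1 : Fin a → R) = -(lam (l : Fin b → R)) := rfl
    rw [h1, h2, neg_add_cancel, map_zero, sub_zero]
  · intro r x
    apply Subtype.ext
    show F (r • x) = (RingHom.id R) r • F x
    rw [map_smul]; rfl
  · intro s l
    show G (s • l) = (RingHom.id R) s • G l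
    rw [RingHom.id_apply, map_smul]

universe u v

lemma step {R : Type u} {S : Type v} [Ring R] [Ring S] (ρ : R →+* S) (ι : S →+* R)
    (hρι : ρ.comp ι = RingHom.id S)
    {M : Type*} [AddCommGroup M] [Module R M] {L : Type*} [AddCommGroup L] [Module S L]
    (hret : Retr R S ρ ι M L) (m : ℕ)
    (IH1 : ∀ {M' L' : Type u} [AddCommGroup M'] [Module R M'] [AddCommGroup L'] [Module R L'],
      Retr R R (RingHom.id R) (RingHom.id R) M' L' → IsFP R M' m → IsFP R L' m)
    (IH2 : ∀ {M' : Type u} {L' : Type v} [AddCommGroup M'] [Module R M'] [AddCommGroup L']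
      [Module S L'], Retr R S ρ ι M' L' → IsFP R M' m → IsFP S L' m)
    (h : IsFP R M (m + 1)) : IsFP S L (m + 1) := by
  obtain ⟨αp, αm, hretr, hαp, hαm⟩ := hret
  obtain ⟨r, d, e, he, hke, hkd⟩ := h
  obtain ⟨eh, e', heh, he', hpair⟩ := buildPair ρ ι αp αm hρι hretr hαp hαm e he
  have hkere : IsFP R (LinearMap.ker e) m := shift d e (hke (Nat.succ_pos m)) hkd
  have h2 : IsFP R ((LinearMap.ker e) × (Fin (r 0 + r 0) → R)) m := addFree hkere _
  have h3 : IsFP R (LinearMap.ker eh) m := IH1 (schanuelRetract e he eh heh) h2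
  have h4 : IsFP S (LinearMap.ker e') m := IH2 hpair h3
  exact prepend he' h4

lemma mainSame : ∀ (m : ℕ) {R : Type u} [Ring R] {M L : Type u}
    [AddCommGroup M] [Module R M] [AddCommGroup L] [Module R L],
    Retr R R (RingHom.id R) (RingHom.id R) M L → IsFP R M m → IsFP R L m := by
  intro m
  induction m with
  | zero =>
    intro R _ M L _ _ _ _ hret h
    exact base _ _ hret h
  | succ m IH =>
    intro R _ M L _ _ _ _ hret h
    exact step (RingHom.id R) (RingHom.id R) (RingHom.id_comp _) hret m
      (fun hr hm => IH hr hm) (fun hr hm => IH hr hm) h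

lemma mainDiff : ∀ (m : ℕ) {R : Type u} {S : Type v} [Ring R] [Ring S]
    (ρ : R →+* S) (ι : S →+* R) (hρι : ρ.comp ι = RingHom.id S)
    {M : Type u} {L : Type v} [AddCommGroup M] [Module R M] [AddCommGroup L] [Module S L],
    Retr R S ρ ι M L → IsFP R M m → IsFP S L m := by
  intro m
  induction m with
  | zero =>
    intro R S _ _ ρ ι hρι M L _ _ _ _ hret h
    exact base ρ ι hret h
  | succ m IH =>
    intro R S _ _ ρ ι hρι M L _ _ _ _ hret h
    exact step ρ ι hρι hret m
      (fun hr hm => mainSame m hr hm) (fun hr hm => IH ρ ι hρι hr hm) h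

end RetrFP

/-- Let `ρ : R →+* S`, `ι : S →+* R` with `ρ ∘ ι = id`, and let
`(M, L, α⁺, α⁻)` be a retractive pair: `α⁺ : M → L` additive and `R`-linear (with `L` an
`R`-module via `ρ`), `α⁻ : L → M` additive and `S`-linear (with `M` an `S`-module via `ι`),
and `α⁺ ∘ α⁻ = id`.  If `M` is of type `FP n` over `R`, then `L` is of type `FP n` over
`S`. -/
theorem retractive_pair_FP
    (R S : Type*) [Ring R] [Ring S] (ρ : R →+* S) (ι : S →+* R)
    (hρι : ρ.comp ι = RingHom.id S)
    (M : Type*) [AddCommGroup M] [Module R M]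
    (L : Type*) [AddCommGroup L] [Module S L]
    (αp : M →+ L) (αm : L →+ M)
    (hretr : ∀ l : L, αp (αm l) = l)
    (hαp : ∀ (r : R) (m : M), αp (r • m) = ρ r • αp m)
    (hαm : ∀ (s : S) (l : L), αm (s • l) = ι s • αm l)
    (n : ℕ) (h : IsFP R M n) :
    IsFP S L n := by
  have hret : RetrFP.Retr R S ρ ι M L := ⟨αp, αm, hretr, hαp, hαm⟩
  match n with
  | 0 => exact RetrFP.base ρ ι hret h
  | (m+1) =>
    exact RetrFP.step ρ ι hρι hret m
      (fun hr hm => RetrFP.mainSame m hr hm)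
      (fun hr hm => RetrFP.mainDiff m ρ ι hρι hr hm) h
end

section
/- Let K be a commutative ring, A a K-algebra which is projective as a K-module, with augmentation ε: A → K, and n ≥ 0. If A is of type bi-FP_n, then A is of type left-FP_n and of type right-FP_n. -/
open Function LinearMap TensorProduct MulOpposite

section Helpers

variable {K : Type*} [CommRing K] {A : Type*} [Ring A] [Algebra K A]

@[simp] lemma lmulT_tmul (a x y : A) : lmulT K A a (x ⊗ₜ[K] y) = (a * x) ⊗ₜ[K] y := rfl

@[simp] lemma rmulT_tmul (b x y : A) : rmulT K A b (x ⊗ₜ[K] y) = x ⊗ₜ[K] (y * b) := rfl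

lemma rmulT_comp (a b : A) : rmulT K A b ∘ₗ rmulT K A a = rmulT K A (a * b) :=
  TensorProduct.ext' fun x y => by simp [mul_assoc]

lemma lmulT_comp (a b : A) : lmulT K A a ∘ₗ lmulT K A b = lmulT K A (a * b) :=
  TensorProduct.ext' fun x y => by simp [mul_assoc]

lemma rmulT_add (b b' : A) : rmulT K A (b + b') = rmulT K A b + rmulT K A b' :=
  TensorProduct.ext' fun x y => by simp [mul_add, tmul_add]

lemma rmulT_smul (c : K) (b : A) : rmulT K A (c • b) = c • rmulT K A b :=
  TensorProduct.ext' fun x y => by simp [mul_smul_comm, tmul_smul]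

lemma lmulT_add (b b' : A) : lmulT K A (b + b') = lmulT K A b + lmulT K A b' :=
  TensorProduct.ext' fun x y => by simp [add_mul, add_tmul]

lemma lmulT_smul (c : K) (b : A) : lmulT K A (c • b) = c • lmulT K A b :=
  TensorProduct.ext' fun x y => by simp [smul_mul_assoc, smul_tmul']

/-- `u ⊗ v ↦ ε v • u`. -/
noncomputable def phiL (ε : A →ₐ[K] K) : (A ⊗[K] A) →ₗ[K] A :=
  TensorProduct.lift (LinearMap.mk₂ K (fun u v => ε v • u)
    (fun m₁ m₂ n => smul_add _ _ _)
    (fun c m n => smul_comm _ _ _)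
    (fun m n₁ n₂ => by simp [add_smul])
    (fun c m n => by simp [mul_smul]))

/-- `u ⊗ v ↦ ε u • v`. -/
noncomputable def phiR (ε : A →ₐ[K] K) : (A ⊗[K] A) →ₗ[K] A :=
  TensorProduct.lift (LinearMap.mk₂ K (fun u v => ε u • v)
    (fun m₁ m₂ n => by simp [add_smul])
    (fun c m n => by simp [mul_smul])
    (fun m n₁ n₂ => smul_add _ _ _)
    (fun c m n => smul_comm _ _ _))

/-- `a ↦ a ⊗ 1`. -/
noncomputable def sL (K A : Type*) [CommRing K] [Ring A] [Algebra K A] : A →ₗ[K] A ⊗[K] A :=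
  (TensorProduct.mk K A A).flip 1

/-- `a ↦ 1 ⊗ a`. -/
noncomputable def sR (K A : Type*) [CommRing K] [Ring A] [Algebra K A] : A →ₗ[K] A ⊗[K] A :=
  TensorProduct.mk K A A 1

variable (ε : A →ₐ[K] K)

@[simp] lemma phiL_tmul (u v : A) : phiL ε (u ⊗ₜ[K] v) = ε v • u := rfl
@[simp] lemma phiR_tmul (u v : A) : phiR ε (u ⊗ₜ[K] v) = ε u • v := rfl
@[simp] lemma sL_apply (a : A) : sL K A a = a ⊗ₜ[K] 1 := rfl
@[simp] lemma sR_apply (a : A) : sR K A a = 1 ⊗ₜ[K] a := rfl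

@[simp] lemma phiL_sL (a : A) : phiL ε (sL K A a) = a := by simp

@[simp] lemma phiR_sR (a : A) : phiR ε (sR K A a) = a := by simp

lemma phiL_rmulT (b : A) (t : A ⊗[K] A) : phiL ε (rmulT K A b t) = ε b • phiL ε t := by
  have : phiL ε ∘ₗ rmulT K A b = ε b • phiL ε := TensorProduct.ext' fun x y => by
    simp [mul_smul, mul_comm (ε y) (ε b), mul_smul]
  exact LinearMap.congr_fun this t

lemma phiL_lmulT (a : A) (t : A ⊗[K] A) : phiL ε (lmulT K A a t) = a * phiL ε t := by
  have : phiL ε ∘ₗ lmulT K A a = LinearMap.mulLeft K a ∘ₗ phiL ε := TensorProduct.ext' fun x y => by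
    simp [mul_smul_comm]
  exact LinearMap.congr_fun this t

lemma phiR_lmulT (a : A) (t : A ⊗[K] A) : phiR ε (lmulT K A a t) = ε a • phiR ε t := by
  have : phiR ε ∘ₗ lmulT K A a = ε a • phiR ε := TensorProduct.ext' fun x y => by
    simp [mul_smul, mul_comm (ε x) (ε a), mul_smul]
  exact LinearMap.congr_fun this t

lemma phiR_rmulT (b : A) (t : A ⊗[K] A) : phiR ε (rmulT K A b t) = phiR ε t * b := by
  have : phiR ε ∘ₗ rmulT K A b = LinearMap.mulRight K b ∘ₗ phiR ε := TensorProduct.ext' fun x y => by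
    simp [smul_mul_assoc]
  exact LinearMap.congr_fun this t

@[simp] lemma compLeftApp {M N : Type*} [AddCommMonoid M] [Module K M] [AddCommMonoid N]
    [Module K N] (f : M →ₗ[K] N) {ι : Type*} (x : ι → M) (j : ι) :
    (f.compLeft ι x) j = f (x j) := rfl

lemma compLeftSingle {M N : Type*} [AddCommMonoid M] [Module K M] [AddCommMonoid N]
    [Module K N] (f : M →ₗ[K] N) {m : ℕ} (j : Fin m) (t : M) :
    f.compLeft (Fin m) (Pi.single j t) = Pi.single j (f t) := by
  funext k
  rcases eq_or_ne k j with rfl | hk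
  · simp
  · simp [Pi.single_eq_of_ne hk]

end Helpers

section Lift

variable {K : Type*} [CommRing K] {A : Type*} [Ring A] [Algebra K A]

/-- Lifting through a surjection-onto-its-range, `rmulT`-equivariantly. -/
lemma liftR_exists (hproj : Module.Projective K A) {q s t : ℕ}
    (f : (Fin q → A ⊗[K] A) →ₗ[K] (Fin t → A ⊗[K] A))
    (p : (Fin s → A ⊗[K] A) →ₗ[K] (Fin t → A ⊗[K] A))
    (hf : ∀ b : A, f ∘ₗ (rmulT K A b).compLeft (Fin q) = (rmulT K A b).compLeft (Fin t) ∘ₗ f)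
    (hp : ∀ b : A, p ∘ₗ (rmulT K A b).compLeft (Fin s) = (rmulT K A b).compLeft (Fin t) ∘ₗ p)
    (hle : LinearMap.range f ≤ LinearMap.range p) :
    ∃ g : (Fin q → A ⊗[K] A) →ₗ[K] (Fin s → A ⊗[K] A), p ∘ₗ g = f ∧
      ∀ b : A, g ∘ₗ (rmulT K A b).compLeft (Fin q) = (rmulT K A b).compLeft (Fin s) ∘ₗ g := by
  classical
  haveI := hproj
  -- lift the generators
  have key : ∀ j : Fin q, ∃ β : A →ₗ[K] (Fin s → A ⊗[K] A),
      p ∘ₗ β = f ∘ₗ LinearMap.single K (fun _ : Fin q => A ⊗[K] A) j ∘ₗ sL K A := by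
    intro j
    set α := f ∘ₗ LinearMap.single K (fun _ : Fin q => A ⊗[K] A) j ∘ₗ sL K A
    have hα : ∀ a : A, α a ∈ LinearMap.range p := fun a => hle ⟨_, rfl⟩
    obtain ⟨β, hβ⟩ := Module.projective_lifting_property p.rangeRestrict
      (α.codRestrict (LinearMap.range p) hα) p.surjective_rangeRestrict
    exact ⟨β, by ext a : 1; exact congrArg Subtype.val (LinearMap.congr_fun hβ a)⟩
  choose β hβ using key
  -- extend over the tensor product using the right action
  have Gdef : ∀ j : Fin q, ∃ G : (A ⊗[K] A) →ₗ[K] (Fin s → A ⊗[K] A),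
      ∀ a b : A, G (a ⊗ₜ[K] b) = (rmulT K A b).compLeft (Fin s) (β j a) := by
    intro j
    refine ⟨TensorProduct.lift (LinearMap.mk₂ K
      (fun a b => (rmulT K A b).compLeft (Fin s) (β j a)) ?_ ?_ ?_ ?_), fun a b => rfl⟩
    · intro m₁ m₂ n; rw [map_add, map_add]
    · intro c m n; rw [map_smul, map_smul]
    · intro m n₁ n₂; funext k; simp [rmulT_add]
    · intro c m n; funext k; simp [rmulT_smul]
  choose G hG using Gdef
  have hsum : ∀ (j : Fin q) (w : A ⊗[K] A),
      (∑ j' : Fin q, G j' ∘ₗ LinearMap.proj j') (Pi.single j w) = G j w := by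
    intro j w
    rw [LinearMap.sum_apply, Finset.sum_eq_single j]
    · simp
    · intro k _ hk
      simp [LinearMap.proj, Pi.single_eq_of_ne hk]
    · simp
  refine ⟨∑ j : Fin q, G j ∘ₗ LinearMap.proj j, ?_, ?_⟩
  · apply LinearMap.pi_ext
    intro j x
    rw [LinearMap.comp_apply, hsum]
    -- show p ∘ G j = f ∘ single j by tensor ext
    have : p ∘ₗ G j = f ∘ₗ LinearMap.single K (fun _ : Fin q => A ⊗[K] A) j :=
      TensorProduct.ext' fun a b => by
        simp only [LinearMap.comp_apply]
        have h1 : p (G j (a ⊗ₜ[K] b)) =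
            (rmulT K A b).compLeft (Fin t) (p (β j a)) := by
          rw [hG]
          exact LinearMap.congr_fun (hp b) (β j a)
        have h1' : p ((β j) a) = f (Pi.single j (sL K A a)) := by
          have := LinearMap.congr_fun (hβ j) a
          simpa using this
        rw [h1, h1']
        have h2 := LinearMap.congr_fun (hf b)
          ((Pi.single j (sL K A a) : Fin q → A ⊗[K] A))
        simp only [LinearMap.comp_apply] at h2
        rw [← h2]
        congr 1
        show (rmulT K A b).compLeft (Fin q) (Pi.single j (a ⊗ₜ[K] 1)) = Pi.single j (a ⊗ₜ[K] b)
        rw [compLeftSingle]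
        simp
    exact LinearMap.congr_fun this x
  · intro b
    have hGcomm : ∀ j : Fin q, G j ∘ₗ rmulT K A b =
        (rmulT K A b).compLeft (Fin s) ∘ₗ G j := by
      intro j
      refine TensorProduct.ext' fun a c => ?_
      simp only [LinearMap.comp_apply, rmulT_tmul, hG]
      funext k
      simp only [compLeftApp]
      exact (LinearMap.congr_fun (rmulT_comp c b) (β j a k)).symm
    apply LinearMap.pi_ext
    intro j w
    simp only [LinearMap.comp_apply]
    rw [compLeftSingle, hsum, hsum]
    have := LinearMap.congr_fun (hGcomm j) w
    simpa using this

/-- Lifting, `lmulT`-equivariantly. -/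
lemma liftL_exists (hproj : Module.Projective K A) {q s t : ℕ}
    (f : (Fin q → A ⊗[K] A) →ₗ[K] (Fin t → A ⊗[K] A))
    (p : (Fin s → A ⊗[K] A) →ₗ[K] (Fin t → A ⊗[K] A))
    (hf : ∀ b : A, f ∘ₗ (lmulT K A b).compLeft (Fin q) = (lmulT K A b).compLeft (Fin t) ∘ₗ f)
    (hp : ∀ b : A, p ∘ₗ (lmulT K A b).compLeft (Fin s) = (lmulT K A b).compLeft (Fin t) ∘ₗ p)
    (hle : LinearMap.range f ≤ LinearMap.range p) :
    ∃ g : (Fin q → A ⊗[K] A) →ₗ[K] (Fin s → A ⊗[K] A), p ∘ₗ g = f ∧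
      ∀ b : A, g ∘ₗ (lmulT K A b).compLeft (Fin q) = (lmulT K A b).compLeft (Fin s) ∘ₗ g := by
  classical
  haveI := hproj
  have key : ∀ j : Fin q, ∃ β : A →ₗ[K] (Fin s → A ⊗[K] A),
      p ∘ₗ β = f ∘ₗ LinearMap.single K (fun _ : Fin q => A ⊗[K] A) j ∘ₗ sR K A := by
    intro j
    set α := f ∘ₗ LinearMap.single K (fun _ : Fin q => A ⊗[K] A) j ∘ₗ sR K A
    have hα : ∀ a : A, α a ∈ LinearMap.range p := fun a => hle ⟨_, rfl⟩
    obtain ⟨β, hβ⟩ := Module.projective_lifting_property p.rangeRestrict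
      (α.codRestrict (LinearMap.range p) hα) p.surjective_rangeRestrict
    exact ⟨β, by ext a : 1; exact congrArg Subtype.val (LinearMap.congr_fun hβ a)⟩
  choose β hβ using key
  have Gdef : ∀ j : Fin q, ∃ G : (A ⊗[K] A) →ₗ[K] (Fin s → A ⊗[K] A),
      ∀ a b : A, G (a ⊗ₜ[K] b) = (lmulT K A a).compLeft (Fin s) (β j b) := by
    intro j
    refine ⟨TensorProduct.lift (LinearMap.mk₂ K
      (fun a b => (lmulT K A a).compLeft (Fin s) (β j b)) ?_ ?_ ?_ ?_), fun a b => rfl⟩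
    · intro m₁ m₂ n; funext k; simp [lmulT_add]
    · intro c m n; funext k; simp [lmulT_smul]
    · intro m n₁ n₂; rw [map_add, map_add]
    · intro c m n; rw [map_smul, map_smul]
  choose G hG using Gdef
  have hsum : ∀ (j : Fin q) (w : A ⊗[K] A),
      (∑ j' : Fin q, G j' ∘ₗ LinearMap.proj j') (Pi.single j w) = G j w := by
    intro j w
    rw [LinearMap.sum_apply, Finset.sum_eq_single j]
    · simp
    · intro k _ hk
      simp [LinearMap.proj, Pi.single_eq_of_ne hk]
    · simp
  refine ⟨∑ j : Fin q, G j ∘ₗ LinearMap.proj j, ?_, ?_⟩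
  · apply LinearMap.pi_ext
    intro j x
    rw [LinearMap.comp_apply, hsum]
    have : p ∘ₗ G j = f ∘ₗ LinearMap.single K (fun _ : Fin q => A ⊗[K] A) j :=
      TensorProduct.ext' fun a b => by
        simp only [LinearMap.comp_apply]
        have h1 : p (G j (a ⊗ₜ[K] b)) =
            (lmulT K A a).compLeft (Fin t) (p (β j b)) := by
          rw [hG]
          exact LinearMap.congr_fun (hp a) (β j b)
        have h1' : p ((β j) b) = f (Pi.single j (sR K A b)) := by
          have := LinearMap.congr_fun (hβ j) b
          simpa using this
        rw [h1, h1']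
        have h2 := LinearMap.congr_fun (hf a)
          ((Pi.single j (sR K A b) : Fin q → A ⊗[K] A))
        simp only [LinearMap.comp_apply] at h2
        rw [← h2]
        congr 1
        show (lmulT K A a).compLeft (Fin q) (Pi.single j ((1 : A) ⊗ₜ[K] b)) = Pi.single j (a ⊗ₜ[K] b)
        rw [compLeftSingle]
        simp
    exact LinearMap.congr_fun this x
  · intro b
    have hGcomm : ∀ j : Fin q, G j ∘ₗ lmulT K A b =
        (lmulT K A b).compLeft (Fin s) ∘ₗ G j := by
      intro j
      refine TensorProduct.ext' fun a c => ?_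
      simp only [LinearMap.comp_apply, lmulT_tmul, hG]
      funext k
      simp only [compLeftApp]
      exact (LinearMap.congr_fun (lmulT_comp b a) (β j c k)).symm
    apply LinearMap.pi_ext
    intro j w
    simp only [LinearMap.comp_apply]
    rw [compLeftSingle, hsum, hsum]
    have := LinearMap.congr_fun (hGcomm j) w
    simpa using this

end Lift

section Push

variable {K : Type*} [CommRing K] {A : Type*} [Ring A] [Algebra K A] (ε : A →ₐ[K] K)

lemma pushL {a b : ℕ} (g : (Fin a → A ⊗[K] A) →ₗ[K] (Fin b → A ⊗[K] A))
    (hg : ∀ c : A, g ∘ₗ (rmulT K A c).compLeft (Fin a) = (rmulT K A c).compLeft (Fin b) ∘ₗ g)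
    (x : Fin a → A ⊗[K] A) :
    (phiL ε).compLeft (Fin b) (g x) =
      (phiL ε).compLeft (Fin b) (g ((sL K A).compLeft (Fin a) ((phiL ε).compLeft (Fin a) x))) := by
  classical
  have main : (phiL ε).compLeft (Fin b) ∘ₗ g =
      ((phiL ε).compLeft (Fin b) ∘ₗ g) ∘ₗ (sL K A).compLeft (Fin a) ∘ₗ (phiL ε).compLeft (Fin a) := by
    apply LinearMap.pi_ext
    intro j t
    induction t using TensorProduct.induction_on with
    | zero => simp
    | add y z hy hz =>
      have hsingle : (Pi.single j (y + z) : Fin a → A ⊗[K] A) =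
          Pi.single j y + Pi.single j z := by
        funext k; rcases eq_or_ne k j with rfl | hk
        · simp
        · simp [Pi.single_eq_of_ne hk]
      rw [hsingle, map_add, map_add, hy, hz]
    | tmul u v =>
      simp only [LinearMap.comp_apply]
      have e1 : (Pi.single j (u ⊗ₜ[K] v) : Fin a → A ⊗[K] A) =
          (rmulT K A v).compLeft (Fin a) (Pi.single j (u ⊗ₜ[K] 1)) := by
        rw [compLeftSingle]; simp
      have e2 : ∀ (m : ℕ) (z : Fin m → A ⊗[K] A),
          (phiL ε).compLeft (Fin m) ((rmulT K A v).compLeft (Fin m) z) =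
            ε v • (phiL ε).compLeft (Fin m) z := fun m z =>
        funext fun k => phiL_rmulT ε v (z k)
      have lhs : (phiL ε).compLeft (Fin b) (g (Pi.single j (u ⊗ₜ[K] v))) =
          ε v • (phiL ε).compLeft (Fin b) (g (Pi.single j (u ⊗ₜ[K] 1))) := by
        rw [e1]
        have hgv : g (((rmulT K A v).compLeft (Fin a)) (Pi.single j (u ⊗ₜ[K] 1))) =
            ((rmulT K A v).compLeft (Fin b)) (g (Pi.single j (u ⊗ₜ[K] 1))) := by
          have := LinearMap.congr_fun (hg v) (Pi.single j (u ⊗ₜ[K] 1))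
          simpa using this
        rw [hgv, e2]
      have e3 : (phiL ε).compLeft (Fin a) (Pi.single j (u ⊗ₜ[K] v)) =
          ε v • (Pi.single j u : Fin a → A) := by
        rw [compLeftSingle]
        rw [phiL_tmul]
        funext k; rcases eq_or_ne k j with rfl | hk
        · simp
        · simp [Pi.single_eq_of_ne hk]
      have e4 : (sL K A).compLeft (Fin a) (Pi.single j u) = Pi.single j (u ⊗ₜ[K] (1:A)) := by
        rw [compLeftSingle]; rfl
      rw [lhs, e3, map_smul, e4, map_smul, map_smul]
  exact LinearMap.congr_fun main x

lemma pushR {a b : ℕ} (g : (Fin a → A ⊗[K] A) →ₗ[K] (Fin b → A ⊗[K] A))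
    (hg : ∀ c : A, g ∘ₗ (lmulT K A c).compLeft (Fin a) = (lmulT K A c).compLeft (Fin b) ∘ₗ g)
    (x : Fin a → A ⊗[K] A) :
    (phiR ε).compLeft (Fin b) (g x) =
      (phiR ε).compLeft (Fin b) (g ((sR K A).compLeft (Fin a) ((phiR ε).compLeft (Fin a) x))) := by
  classical
  have main : (phiR ε).compLeft (Fin b) ∘ₗ g =
      ((phiR ε).compLeft (Fin b) ∘ₗ g) ∘ₗ (sR K A).compLeft (Fin a) ∘ₗ (phiR ε).compLeft (Fin a) := by
    apply LinearMap.pi_ext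
    intro j t
    induction t using TensorProduct.induction_on with
    | zero => simp
    | add y z hy hz =>
      have hsingle : (Pi.single j (y + z) : Fin a → A ⊗[K] A) =
          Pi.single j y + Pi.single j z := by
        funext k; rcases eq_or_ne k j with rfl | hk
        · simp
        · simp [Pi.single_eq_of_ne hk]
      rw [hsingle, map_add, map_add, hy, hz]
    | tmul u v =>
      simp only [LinearMap.comp_apply]
      have e1 : (Pi.single j (u ⊗ₜ[K] v) : Fin a → A ⊗[K] A) =
          (lmulT K A u).compLeft (Fin a) (Pi.single j ((1:A) ⊗ₜ[K] v)) := by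
        rw [compLeftSingle]; simp
      have e2 : ∀ (m : ℕ) (z : Fin m → A ⊗[K] A),
          (phiR ε).compLeft (Fin m) ((lmulT K A u).compLeft (Fin m) z) =
            ε u • (phiR ε).compLeft (Fin m) z := fun m z =>
        funext fun k => phiR_lmulT ε u (z k)
      have lhs : (phiR ε).compLeft (Fin b) (g (Pi.single j (u ⊗ₜ[K] v))) =
          ε u • (phiR ε).compLeft (Fin b) (g (Pi.single j ((1:A) ⊗ₜ[K] v))) := by
        rw [e1]
        have hgv : g (((lmulT K A u).compLeft (Fin a)) (Pi.single j ((1:A) ⊗ₜ[K] v))) =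
            ((lmulT K A u).compLeft (Fin b)) (g (Pi.single j ((1:A) ⊗ₜ[K] v))) := by
          have := LinearMap.congr_fun (hg u) (Pi.single j ((1:A) ⊗ₜ[K] v))
          simpa using this
        rw [hgv, e2]
      have e3 : (phiR ε).compLeft (Fin a) (Pi.single j (u ⊗ₜ[K] v)) =
          ε u • (Pi.single j v : Fin a → A) := by
        rw [compLeftSingle]
        rw [phiR_tmul]
        funext k; rcases eq_or_ne k j with rfl | hk
        · simp
        · simp [Pi.single_eq_of_ne hk]
      have e4 : (sR K A).compLeft (Fin a) (Pi.single j v) = Pi.single j ((1:A) ⊗ₜ[K] v) := by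
        rw [compLeftSingle]; rfl
      rw [lhs, e3, map_smul, e4, map_smul, map_smul]
  exact LinearMap.congr_fun main x

end Push

section LeftCore

variable {K : Type*} [CommRing K] {A : Type*} [Ring A] [Algebra K A]

theorem left_core (hproj : Module.Projective K A) (ε : A →ₐ[K] K) (n : ℕ)
    (h : BiFP K A n) :
    letI : Module A K := Module.compHom K ε.toRingHom
    IsFP A K n := by
  letI : Module A K := Module.compHom K ε.toRingHom
  classical
  obtain ⟨r, d, e, hl, hr, hlact, hract, hsurj, h0, hstep⟩ := h
  -- the K-linear avatars of the pushed-down differentials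
  set Dk : ∀ i : ℕ, (Fin (r (i+1)) → A) →ₗ[K] (Fin (r i) → A) :=
    fun i => (phiL ε).compLeft (Fin (r i)) ∘ₗ d i ∘ₗ (sL K A).compLeft (Fin (r (i+1)))
    with hDkdef
  have PS : ∀ (m : ℕ) (x : Fin m → A),
      (phiL ε).compLeft (Fin m) ((sL K A).compLeft (Fin m) x) = x := fun m x =>
    funext fun k => phiL_sL ε (x k)
  have pushd : ∀ (i : ℕ) (w : Fin (r (i+1)) → A ⊗[K] A),
      (phiL ε).compLeft (Fin (r i)) (d i w) =
        Dk i ((phiL ε).compLeft (Fin (r (i+1))) w) := by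
    intro i w
    have := pushL ε (d i) (hr i) w
    simpa [hDkdef] using this
  -- S intertwines the left A-action
  have Slmul : ∀ (m : ℕ) (a : A) (x : Fin m → A),
      (sL K A).compLeft (Fin m) (a • x) =
        (lmulT K A a).compLeft (Fin m) ((sL K A).compLeft (Fin m) x) := by
    intro m a x
    funext k
    simp only [compLeftApp, sL_apply, Pi.smul_apply, smul_eq_mul, lmulT_tmul]
  have Philmul : ∀ (m : ℕ) (a : A) (w : Fin m → A ⊗[K] A),
      (phiL ε).compLeft (Fin m) ((lmulT K A a).compLeft (Fin m) w) =
        a • (phiL ε).compLeft (Fin m) w := by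
    intro m a w
    funext k
    simp only [compLeftApp, Pi.smul_apply, smul_eq_mul]
    exact phiL_lmulT ε a (w k)
  have Dsmul : ∀ (i : ℕ) (a : A) (x : Fin (r (i+1)) → A), Dk i (a • x) = a • Dk i x := by
    intro i a x
    show (phiL ε).compLeft _ (d i ((sL K A).compLeft _ (a • x))) = _
    rw [Slmul]
    have := LinearMap.congr_fun (hl i a) ((sL K A).compLeft (Fin (r (i+1))) x)
    simp only [LinearMap.comp_apply] at this
    rw [this, Philmul]
    rfl
  -- the augmentation downstairs
  set Ek : (Fin (r 0) → A) →ₗ[K] K :=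
    ε.toLinearMap ∘ₗ e ∘ₗ (sL K A).compLeft (Fin (r 0)) with hEkdef
  have Esmul : ∀ (a : A) (x : Fin (r 0) → A), Ek (a • x) = ε a * Ek x := by
    intro a x
    show ε (e ((sL K A).compLeft _ (a • x))) = _
    rw [Slmul]
    have := LinearMap.congr_fun (hlact a) ((sL K A).compLeft (Fin (r 0)) x)
    simp only [LinearMap.comp_apply] at this
    rw [this]
    simp only [LinearMap.mulLeft_apply, map_mul]
    rfl
  -- E ∘ Φ = ε ∘ e
  have epush : ∀ w : Fin (r 0) → A ⊗[K] A,
      ε (e ((sL K A).compLeft (Fin (r 0)) ((phiL ε).compLeft (Fin (r 0)) w))) = ε (e w) := by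
    have main : ε.toLinearMap ∘ₗ e ∘ₗ (sL K A).compLeft (Fin (r 0)) ∘ₗ
        (phiL ε).compLeft (Fin (r 0)) = ε.toLinearMap ∘ₗ e := by
      apply LinearMap.pi_ext
      intro j t
      induction t using TensorProduct.induction_on with
      | zero => simp
      | add y z hy hz =>
        have hsingle : (Pi.single j (y + z) : Fin (r 0) → A ⊗[K] A) =
            Pi.single j y + Pi.single j z := by
          funext k; rcases eq_or_ne k j with rfl | hk
          · simp
          · simp [Pi.single_eq_of_ne hk]
        rw [hsingle, map_add, map_add, hy, hz]
      | tmul u v =>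
        simp only [LinearMap.comp_apply]
        -- LHS
        have e3 : (phiL ε).compLeft (Fin (r 0)) (Pi.single j (u ⊗ₜ[K] v)) =
            ε v • (Pi.single j u : Fin (r 0) → A) := by
          rw [compLeftSingle, phiL_tmul]
          funext k; rcases eq_or_ne k j with rfl | hk
          · simp
          · simp [Pi.single_eq_of_ne hk]
        have e4 : (sL K A).compLeft (Fin (r 0)) (Pi.single j u) =
            Pi.single j (u ⊗ₜ[K] (1:A)) := by
          rw [compLeftSingle]; rfl
        rw [e3, map_smul, e4, map_smul, map_smul]
        -- RHS
        have e1 : (Pi.single j (u ⊗ₜ[K] v) : Fin (r 0) → A ⊗[K] A) =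
            (rmulT K A v).compLeft (Fin (r 0)) (Pi.single j (u ⊗ₜ[K] 1)) := by
          rw [compLeftSingle]; simp
        rw [e1]
        have := LinearMap.congr_fun (hract v) (Pi.single j (u ⊗ₜ[K] (1:A)))
        simp only [LinearMap.comp_apply] at this
        rw [this]
        simp [mul_comm]
    intro w
    exact LinearMap.congr_fun main w
  -- package the A-linear maps
  refine ⟨r,
    fun i => ⟨⟨Dk i, fun x y => map_add (Dk i) x y⟩, fun a x => Dsmul i a x⟩,
    ⟨⟨Ek, fun x y => map_add Ek x y⟩, fun a x => Esmul a x⟩,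
    ?_, ?_, ?_⟩
  -- surjectivity of E
  · intro k
    obtain ⟨w, hw⟩ := hsurj (algebraMap K A k)
    refine ⟨(phiL ε).compLeft (Fin (r 0)) w, ?_⟩
    show Ek ((phiL ε).compLeft (Fin (r 0)) w) = k
    show ε (e ((sL K A).compLeft _ ((phiL ε).compLeft _ w))) = k
    rw [epush, hw]
    simp
  -- exactness at level 0
  · intro hn
    -- contracting data
    obtain ⟨y₀, hy₀⟩ := hsurj 1
    have σdef : ∃ σ : A →ₗ[K] (Fin (r 0) → A ⊗[K] A),
        ∀ m : A, σ m = (rmulT K A m).compLeft (Fin (r 0)) y₀ := by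
      refine ⟨⟨⟨fun m => (rmulT K A m).compLeft (Fin (r 0)) y₀, ?_⟩, ?_⟩, fun m => rfl⟩
      · intro m m'; funext k; simp [rmulT_add]
      · intro c m; funext k; simp [rmulT_smul]
    obtain ⟨σ, hσ⟩ := σdef
    have eσ : ∀ m : A, e (σ m) = m := by
      intro m
      rw [hσ]
      have := LinearMap.congr_fun (hract m) y₀
      simp only [LinearMap.comp_apply] at this
      rw [this, LinearMap.mulRight_apply, hy₀, one_mul]
    have σr : ∀ (b m : A), σ (m * b) = (rmulT K A b).compLeft (Fin (r 0)) (σ m) := by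
      intro b m
      rw [hσ, hσ]
      funext k
      simp only [compLeftApp]
      exact (LinearMap.congr_fun (rmulT_comp m b) (y₀ k)).symm
    -- homotopy at level 0
    have P0 : ∃ h₀ : (Fin (r 0) → A ⊗[K] A) →ₗ[K] (Fin (r 1) → A ⊗[K] A),
        (∀ b : A, h₀ ∘ₗ (rmulT K A b).compLeft (Fin (r 0)) =
          (rmulT K A b).compLeft (Fin (r 1)) ∘ₗ h₀) ∧
        ∀ x, d 0 (h₀ x) = x - σ (e x) := by
      obtain ⟨g, hg1, hg2⟩ := liftR_exists hproj (LinearMap.id - σ ∘ₗ e) (d 0)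
        (fun b => by
          apply LinearMap.ext; intro x
          simp only [LinearMap.sub_apply, LinearMap.comp_apply, LinearMap.id_apply]
          have he := LinearMap.congr_fun (hract b) x
          simp only [LinearMap.comp_apply] at he
          rw [he, LinearMap.mulRight_apply, σr, map_sub])
        (hr 0)
        (by
          rintro _ ⟨x, rfl⟩
          rw [← h0 hn, LinearMap.mem_ker]
          simp only [LinearMap.sub_apply, LinearMap.comp_apply, LinearMap.id_apply, map_sub]
          rw [eσ, sub_self])
      exact ⟨g, hg2, fun x => LinearMap.congr_fun hg1 x⟩
    obtain ⟨h₀, h₀comm, h₀id⟩ := P0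
    -- ker E = range D 0
    apply le_antisymm
    · intro x hx
      have hx' : Ek x = 0 := hx
      set y := (sL K A).compLeft (Fin (r 0)) x with hy
      have hΦy : (phiL ε).compLeft (Fin (r 0)) y = x := PS _ x
      have hid := h₀id y
      have h2 : (phiL ε).compLeft (Fin (r 0)) (d 0 (h₀ y)) =
          x - (phiL ε).compLeft (Fin (r 0)) (σ (e y)) := by
        rw [hid, map_sub, hΦy]
      have hσΦ : (phiL ε).compLeft (Fin (r 0)) (σ (e y)) = 0 := by
        rw [hσ]
        have : (phiL ε).compLeft (Fin (r 0))
            ((rmulT K A (e y)).compLeft (Fin (r 0)) y₀) =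
            ε (e y) • (phiL ε).compLeft (Fin (r 0)) y₀ :=
          funext fun k => phiL_rmulT ε (e y) (y₀ k)
        rw [this]
        have : ε (e y) = 0 := hx'
        rw [this, zero_smul]
      rw [hσΦ, sub_zero] at h2
      rw [pushd 0 (h₀ y)] at h2
      exact ⟨(phiL ε).compLeft (Fin (r 1)) (h₀ y), h2⟩
    · rintro _ ⟨z, rfl⟩
      show Ek (Dk 0 z) = 0
      show ε (e ((sL K A).compLeft _ ((phiL ε).compLeft _ (d 0 ((sL K A).compLeft _ z))))) = 0
      rw [epush]
      have hker : e (d 0 ((sL K A).compLeft (Fin (r 1)) z)) = 0 := by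
        have : d 0 ((sL K A).compLeft (Fin (r 1)) z) ∈ LinearMap.range (d 0) := ⟨_, rfl⟩
        rw [← h0 hn] at this
        exact this
      rw [hker, map_zero]
  -- exactness at level i+1
  · intro i hi
    have hn : 0 < n := by omega
    obtain ⟨y₀, hy₀⟩ := hsurj 1
    have σdef : ∃ σ : A →ₗ[K] (Fin (r 0) → A ⊗[K] A),
        ∀ m : A, σ m = (rmulT K A m).compLeft (Fin (r 0)) y₀ := by
      refine ⟨⟨⟨fun m => (rmulT K A m).compLeft (Fin (r 0)) y₀, ?_⟩, ?_⟩, fun m => rfl⟩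
      · intro m m'; funext k; simp [rmulT_add]
      · intro c m; funext k; simp [rmulT_smul]
    obtain ⟨σ, hσ⟩ := σdef
    have eσ : ∀ m : A, e (σ m) = m := by
      intro m
      rw [hσ]
      have := LinearMap.congr_fun (hract m) y₀
      simp only [LinearMap.comp_apply] at this
      rw [this, LinearMap.mulRight_apply, hy₀, one_mul]
    have σr : ∀ (b m : A), σ (m * b) = (rmulT K A b).compLeft (Fin (r 0)) (σ m) := by
      intro b m
      rw [hσ, hσ]
      funext k
      simp only [compLeftApp]
      exact (LinearMap.congr_fun (rmulT_comp m b) (y₀ k)).symm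
    have P0 : ∃ h₀ : (Fin (r 0) → A ⊗[K] A) →ₗ[K] (Fin (r 1) → A ⊗[K] A),
        (∀ b : A, h₀ ∘ₗ (rmulT K A b).compLeft (Fin (r 0)) =
          (rmulT K A b).compLeft (Fin (r 1)) ∘ₗ h₀) ∧
        ∀ x, d 0 (h₀ x) = x - σ (e x) := by
      obtain ⟨g, hg1, hg2⟩ := liftR_exists hproj (LinearMap.id - σ ∘ₗ e) (d 0)
        (fun b => by
          apply LinearMap.ext; intro x
          simp only [LinearMap.sub_apply, LinearMap.comp_apply, LinearMap.id_apply]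
          have he := LinearMap.congr_fun (hract b) x
          simp only [LinearMap.comp_apply] at he
          rw [he, LinearMap.mulRight_apply, σr, map_sub])
        (hr 0)
        (by
          rintro _ ⟨x, rfl⟩
          rw [← h0 hn, LinearMap.mem_ker]
          simp only [LinearMap.sub_apply, LinearMap.comp_apply, LinearMap.id_apply, map_sub]
          rw [eσ, sub_self])
      exact ⟨g, hg2, fun x => LinearMap.congr_fun hg1 x⟩
    -- homotopies at successor levels
    have Psucc : ∀ m : ℕ, m + 1 < n →
        ∃ (g : (Fin (r m) → A ⊗[K] A) →ₗ[K] (Fin (r (m+1)) → A ⊗[K] A))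
          (hh : (Fin (r (m+1)) → A ⊗[K] A) →ₗ[K] (Fin (r (m+2)) → A ⊗[K] A)),
          (∀ b : A, g ∘ₗ (rmulT K A b).compLeft (Fin (r m)) =
            (rmulT K A b).compLeft (Fin (r (m+1))) ∘ₗ g) ∧
          (∀ b : A, hh ∘ₗ (rmulT K A b).compLeft (Fin (r (m+1))) =
            (rmulT K A b).compLeft (Fin (r (m+2))) ∘ₗ hh) ∧
          ∀ x, d (m+1) (hh x) = x - g (d m x) := by
      intro m
      induction m with
      | zero =>
        intro h1
        obtain ⟨h₀, h₀comm, h₀id⟩ := P0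
        obtain ⟨hh, hh1, hh2⟩ := liftR_exists hproj (LinearMap.id - h₀ ∘ₗ d 0) (d 1)
          (fun b => by
            apply LinearMap.ext; intro x
            simp only [LinearMap.sub_apply, LinearMap.comp_apply, LinearMap.id_apply]
            have hd := LinearMap.congr_fun (hr 0 b) x
            simp only [LinearMap.comp_apply] at hd
            have hc := LinearMap.congr_fun (h₀comm b) (d 0 x)
            simp only [LinearMap.comp_apply] at hc
            rw [hd, hc, map_sub])
          (hr 1)
          (by
            rintro _ ⟨x, rfl⟩
            rw [← hstep 0 h1, LinearMap.mem_ker]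
            simp only [LinearMap.sub_apply, LinearMap.comp_apply, LinearMap.id_apply, map_sub]
            rw [h₀id (d 0 x)]
            have he : e (d 0 x) = 0 := by
              have : d 0 x ∈ LinearMap.range (d 0) := ⟨_, rfl⟩
              rw [← h0 hn] at this
              exact this
            rw [he, map_zero, sub_zero, sub_self])
        exact ⟨h₀, hh, h₀comm, hh2, fun x => LinearMap.congr_fun hh1 x⟩
      | succ m IH =>
        intro h2
        obtain ⟨g, hh, hgc, hhc, hid⟩ := IH (by omega)
        obtain ⟨hh', hh'1, hh'2⟩ := liftR_exists hproj (LinearMap.id - hh ∘ₗ d (m+1)) (d (m+2))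
          (fun b => by
            apply LinearMap.ext; intro x
            simp only [LinearMap.sub_apply, LinearMap.comp_apply, LinearMap.id_apply]
            have hd := LinearMap.congr_fun (hr (m+1) b) x
            simp only [LinearMap.comp_apply] at hd
            have hc := LinearMap.congr_fun (hhc b) (d (m+1) x)
            simp only [LinearMap.comp_apply] at hc
            rw [hd, hc, map_sub])
          (hr (m+2))
          (by
            rintro _ ⟨x, rfl⟩
            rw [← hstep (m+1) h2, LinearMap.mem_ker]
            simp only [LinearMap.sub_apply, LinearMap.comp_apply, LinearMap.id_apply, map_sub]
            rw [hid (d (m+1) x)]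
            have hzero : d m (d (m+1) x) = 0 := by
              have : d (m+1) x ∈ LinearMap.range (d (m+1)) := ⟨_, rfl⟩
              rw [← hstep m (by omega)] at this
              exact this
            rw [hzero, map_zero, sub_zero, sub_self])
        exact ⟨hh, hh', hhc, hh'2, fun x => LinearMap.congr_fun hh'1 x⟩
    obtain ⟨g, hh, hgc, hhc, hid⟩ := Psucc i hi
    apply le_antisymm
    · intro x hx
      have hx' : Dk i x = 0 := hx
      set y := (sL K A).compLeft (Fin (r (i+1))) x with hy
      have hΦy : (phiL ε).compLeft (Fin (r (i+1))) y = x := PS _ x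
      have hid' := hid y
      have h2 : (phiL ε).compLeft (Fin (r (i+1))) (d (i+1) (hh y)) =
          x - (phiL ε).compLeft (Fin (r (i+1))) (g (d i y)) := by
        rw [hid', map_sub, hΦy]
      have hzero : (phiL ε).compLeft (Fin (r (i+1))) (g (d i y)) = 0 := by
        rw [pushL ε g hgc (d i y)]
        have : (phiL ε).compLeft (Fin (r i)) (d i y) = 0 := hx'
        rw [this]
        simp
      rw [hzero, sub_zero] at h2
      rw [pushd (i+1) (hh y)] at h2
      exact ⟨(phiL ε).compLeft (Fin (r (i+2))) (hh y), h2⟩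
    · rintro _ ⟨z, rfl⟩
      show Dk i (Dk (i+1) z) = 0
      have step1 : Dk i (Dk (i+1) z) =
          (phiL ε).compLeft (Fin (r i)) (d i (d (i+1) ((sL K A).compLeft _ z))) := by
        show Dk i ((phiL ε).compLeft _ (d (i+1) ((sL K A).compLeft _ z))) = _
        rw [← pushd i]
      rw [step1]
      have : d i (d (i+1) ((sL K A).compLeft (Fin (r (i+2))) z)) = 0 := by
        have hmem : d (i+1) ((sL K A).compLeft (Fin (r (i+2))) z) ∈
            LinearMap.range (d (i+1)) := ⟨_, rfl⟩
        rw [← hstep i hi] at hmem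
        exact hmem
      rw [this, map_zero]

end LeftCore

section RightCore

variable {K : Type*} [CommRing K] {A : Type*} [Ring A] [Algebra K A]

theorem right_core (hproj : Module.Projective K A) (ε : A →ₐ[K] K) (n : ℕ)
    (h : BiFP K A n) :
    letI : Module Aᵐᵒᵖ K :=
      Module.compHom K (ε.toRingHom.fromOpposite fun _ _ => mul_comm _ _)
    IsFP Aᵐᵒᵖ K n := by
  letI : Module Aᵐᵒᵖ K :=
    Module.compHom K (ε.toRingHom.fromOpposite fun _ _ => mul_comm _ _)
  classical
  obtain ⟨r, d, e, hl, hr, hlact, hract, hsurj, h0, hstep⟩ := h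
  set Dk : ∀ i : ℕ, (Fin (r (i+1)) → A) →ₗ[K] (Fin (r i) → A) :=
    fun i => (phiR ε).compLeft (Fin (r i)) ∘ₗ d i ∘ₗ (sR K A).compLeft (Fin (r (i+1)))
    with hDkdef
  have PS : ∀ (m : ℕ) (x : Fin m → A),
      (phiR ε).compLeft (Fin m) ((sR K A).compLeft (Fin m) x) = x := fun m x =>
    funext fun k => phiR_sR ε (x k)
  have pushd : ∀ (i : ℕ) (w : Fin (r (i+1)) → A ⊗[K] A),
      (phiR ε).compLeft (Fin (r i)) (d i w) =
        Dk i ((phiR ε).compLeft (Fin (r (i+1))) w) := by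
    intro i w
    have := pushR ε (d i) (hl i) w
    simpa [hDkdef] using this
  -- S intertwines the right action (at the level of A-tuples)
  have Srmul : ∀ (m : ℕ) (a : A) (u : Fin m → A),
      (sR K A).compLeft (Fin m) (fun l => u l * a) =
        (rmulT K A a).compLeft (Fin m) ((sR K A).compLeft (Fin m) u) := by
    intro m a u
    funext k
    simp only [compLeftApp, sR_apply, rmulT_tmul]
  have Phirmul : ∀ (m : ℕ) (a : A) (w : Fin m → A ⊗[K] A),
      (phiR ε).compLeft (Fin m) ((rmulT K A a).compLeft (Fin m) w) =
        fun k => (phiR ε).compLeft (Fin m) w k * a := by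
    intro m a w
    funext k
    simp only [compLeftApp]
    exact phiR_rmulT ε a (w k)
  have Dsmul : ∀ (i : ℕ) (a : A) (u : Fin (r (i+1)) → A),
      Dk i (fun l => u l * a) = fun k => Dk i u k * a := by
    intro i a u
    show (phiR ε).compLeft _ (d i ((sR K A).compLeft _ (fun l => u l * a))) = _
    rw [Srmul]
    have := LinearMap.congr_fun (hr i a) ((sR K A).compLeft (Fin (r (i+1))) u)
    simp only [LinearMap.comp_apply] at this
    rw [this, Phirmul]
    rfl
  set Ek : (Fin (r 0) → A) →ₗ[K] K :=
    ε.toLinearMap ∘ₗ e ∘ₗ (sR K A).compLeft (Fin (r 0)) with hEkdef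
  have Esmul : ∀ (a : A) (u : Fin (r 0) → A), Ek (fun l => u l * a) = ε a * Ek u := by
    intro a u
    show ε (e ((sR K A).compLeft _ (fun l => u l * a))) = _
    rw [Srmul]
    have := LinearMap.congr_fun (hract a) ((sR K A).compLeft (Fin (r 0)) u)
    simp only [LinearMap.comp_apply] at this
    rw [this]
    simp only [LinearMap.mulRight_apply, map_mul]
    exact mul_comm _ _
  have epush : ∀ w : Fin (r 0) → A ⊗[K] A,
      ε (e ((sR K A).compLeft (Fin (r 0)) ((phiR ε).compLeft (Fin (r 0)) w))) = ε (e w) := by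
    have main : ε.toLinearMap ∘ₗ e ∘ₗ (sR K A).compLeft (Fin (r 0)) ∘ₗ
        (phiR ε).compLeft (Fin (r 0)) = ε.toLinearMap ∘ₗ e := by
      apply LinearMap.pi_ext
      intro j t
      induction t using TensorProduct.induction_on with
      | zero => simp
      | add y z hy hz =>
        have hsingle : (Pi.single j (y + z) : Fin (r 0) → A ⊗[K] A) =
            Pi.single j y + Pi.single j z := by
          funext k; rcases eq_or_ne k j with rfl | hk
          · simp
          · simp [Pi.single_eq_of_ne hk]
        rw [hsingle, map_add, map_add, hy, hz]
      | tmul u v =>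
        simp only [LinearMap.comp_apply]
        have e3 : (phiR ε).compLeft (Fin (r 0)) (Pi.single j (u ⊗ₜ[K] v)) =
            ε u • (Pi.single j v : Fin (r 0) → A) := by
          rw [compLeftSingle, phiR_tmul]
          funext k; rcases eq_or_ne k j with rfl | hk
          · simp
          · simp [Pi.single_eq_of_ne hk]
        have e4 : (sR K A).compLeft (Fin (r 0)) (Pi.single j v) =
            Pi.single j ((1:A) ⊗ₜ[K] v) := by
          rw [compLeftSingle]; rfl
        rw [e3, map_smul, e4, map_smul, map_smul]
        have e1 : (Pi.single j (u ⊗ₜ[K] v) : Fin (r 0) → A ⊗[K] A) =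
            (lmulT K A u).compLeft (Fin (r 0)) (Pi.single j ((1:A) ⊗ₜ[K] v)) := by
          rw [compLeftSingle]; simp
        rw [e1]
        have := LinearMap.congr_fun (hlact u) (Pi.single j ((1:A) ⊗ₜ[K] v))
        simp only [LinearMap.comp_apply] at this
        rw [this]
        simp
    intro w
    exact LinearMap.congr_fun main w
  -- package the Aᵐᵒᵖ-linear maps
  refine ⟨r,
    fun i => ⟨⟨fun x k => op (Dk i (fun l => unop (x l)) k), ?_⟩, ?_⟩,
    ⟨⟨fun x => Ek (fun l => unop (x l)), ?_⟩, ?_⟩,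
    ?_, ?_, ?_⟩
  · intro x y
    have hu : (fun l => unop ((x + y) l)) =
        (fun l => unop (x l)) + fun l => unop (y l) := rfl
    funext k
    show op (Dk i (fun l => unop ((x + y) l)) k) = _
    rw [hu, map_add]
    rfl
  · intro b x
    have hu : (fun l => unop ((b • x) l)) = fun l => unop (x l) * unop b := rfl
    funext k
    show op (Dk i (fun l => unop ((b • x) l)) k) = _
    rw [hu, Dsmul]
    show op (Dk i (fun l => unop (x l)) k * unop b) = _
    rw [MulOpposite.op_mul]
    rfl
  · intro x y
    have hu : (fun l => unop ((x + y) l)) =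
        (fun l => unop (x l)) + fun l => unop (y l) := rfl
    show Ek (fun l => unop ((x + y) l)) = _
    rw [hu, map_add]
  · intro b x
    have hu : (fun l => unop ((b • x) l)) = fun l => unop (x l) * unop b := rfl
    show Ek (fun l => unop ((b • x) l)) = _
    rw [hu, Esmul]
    rfl
  -- surjectivity
  · intro k
    obtain ⟨w, hw⟩ := hsurj (algebraMap K A k)
    refine ⟨fun j => op ((phiR ε).compLeft (Fin (r 0)) w j), ?_⟩
    show Ek (fun l => unop (op ((phiR ε).compLeft (Fin (r 0)) w l))) = k
    have : (fun l => unop (op ((phiR ε).compLeft (Fin (r 0)) w l))) =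
        (phiR ε).compLeft (Fin (r 0)) w := rfl
    rw [this]
    show ε (e ((sR K A).compLeft _ ((phiR ε).compLeft _ w))) = k
    rw [epush, hw]
    simp
  -- exactness at level 0
  · intro hn
    obtain ⟨y₀, hy₀⟩ := hsurj 1
    have σdef : ∃ σ : A →ₗ[K] (Fin (r 0) → A ⊗[K] A),
        ∀ m : A, σ m = (lmulT K A m).compLeft (Fin (r 0)) y₀ := by
      refine ⟨⟨⟨fun m => (lmulT K A m).compLeft (Fin (r 0)) y₀, ?_⟩, ?_⟩, fun m => rfl⟩
      · intro m m'; funext k; simp [lmulT_add]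
      · intro c m; funext k; simp [lmulT_smul]
    obtain ⟨σ, hσ⟩ := σdef
    have eσ : ∀ m : A, e (σ m) = m := by
      intro m
      rw [hσ]
      have := LinearMap.congr_fun (hlact m) y₀
      simp only [LinearMap.comp_apply] at this
      rw [this, LinearMap.mulLeft_apply, hy₀, mul_one]
    have σl : ∀ (b m : A), σ (b * m) = (lmulT K A b).compLeft (Fin (r 0)) (σ m) := by
      intro b m
      rw [hσ, hσ]
      funext k
      simp only [compLeftApp]
      exact (LinearMap.congr_fun (lmulT_comp b m) (y₀ k)).symm
    have P0 : ∃ h₀ : (Fin (r 0) → A ⊗[K] A) →ₗ[K] (Fin (r 1) → A ⊗[K] A),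
        (∀ b : A, h₀ ∘ₗ (lmulT K A b).compLeft (Fin (r 0)) =
          (lmulT K A b).compLeft (Fin (r 1)) ∘ₗ h₀) ∧
        ∀ x, d 0 (h₀ x) = x - σ (e x) := by
      obtain ⟨g, hg1, hg2⟩ := liftL_exists hproj (LinearMap.id - σ ∘ₗ e) (d 0)
        (fun b => by
          apply LinearMap.ext; intro x
          simp only [LinearMap.sub_apply, LinearMap.comp_apply, LinearMap.id_apply]
          have he := LinearMap.congr_fun (hlact b) x
          simp only [LinearMap.comp_apply] at he
          rw [he, LinearMap.mulLeft_apply, σl, map_sub])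
        (hl 0)
        (by
          rintro _ ⟨x, rfl⟩
          rw [← h0 hn, LinearMap.mem_ker]
          simp only [LinearMap.sub_apply, LinearMap.comp_apply, LinearMap.id_apply, map_sub]
          rw [eσ, sub_self])
      exact ⟨g, hg2, fun x => LinearMap.congr_fun hg1 x⟩
    obtain ⟨h₀, h₀comm, h₀id⟩ := P0
    apply le_antisymm
    · intro x hx
      have hx' : Ek (fun l => unop (x l)) = 0 := hx
      set u : Fin (r 0) → A := fun l => unop (x l) with hu
      set y := (sR K A).compLeft (Fin (r 0)) u with hy
      have hΦy : (phiR ε).compLeft (Fin (r 0)) y = u := PS _ u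
      have hid := h₀id y
      have h2 : (phiR ε).compLeft (Fin (r 0)) (d 0 (h₀ y)) =
          u - (phiR ε).compLeft (Fin (r 0)) (σ (e y)) := by
        rw [hid, map_sub, hΦy]
      have hσΦ : (phiR ε).compLeft (Fin (r 0)) (σ (e y)) = 0 := by
        rw [hσ]
        have : (phiR ε).compLeft (Fin (r 0))
            ((lmulT K A (e y)).compLeft (Fin (r 0)) y₀) =
            ε (e y) • (phiR ε).compLeft (Fin (r 0)) y₀ :=
          funext fun k => phiR_lmulT ε (e y) (y₀ k)
        rw [this]
        have : ε (e y) = 0 := hx'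
        rw [this, zero_smul]
      rw [hσΦ, sub_zero] at h2
      rw [pushd 0 (h₀ y)] at h2
      refine ⟨fun k => op ((phiR ε).compLeft (Fin (r 1)) (h₀ y) k), ?_⟩
      show (fun k => op (Dk 0 (fun l => unop (op ((phiR ε).compLeft (Fin (r 1)) (h₀ y) l))) k)) = x
      have hun : (fun l => unop (op ((phiR ε).compLeft (Fin (r 1)) (h₀ y) l))) =
          (phiR ε).compLeft (Fin (r 1)) (h₀ y) := rfl
      rw [hun, h2]
      funext k
      show op (u k) = x k
      rw [hu]
      exact MulOpposite.op_unop (x k)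
    · rintro _ ⟨z, rfl⟩
      show Ek (fun l => unop ((fun k => op (Dk 0 (fun l' => unop (z l')) k)) l)) = 0
      have hun : (fun l => unop ((fun k => op (Dk 0 (fun l' => unop (z l')) k)) l)) =
          Dk 0 (fun l' => unop (z l')) := rfl
      rw [hun]
      show ε (e ((sR K A).compLeft _
        ((phiR ε).compLeft _ (d 0 ((sR K A).compLeft _ (fun l' => unop (z l'))))))) = 0
      rw [epush]
      have hker : e (d 0 ((sR K A).compLeft (Fin (r 1)) (fun l' => unop (z l')))) = 0 := by
        have : d 0 ((sR K A).compLeft (Fin (r 1)) (fun l' => unop (z l'))) ∈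
            LinearMap.range (d 0) := ⟨_, rfl⟩
        rw [← h0 hn] at this
        exact this
      rw [hker, map_zero]
  -- exactness at level i+1
  · intro i hi
    have hn : 0 < n := by omega
    obtain ⟨y₀, hy₀⟩ := hsurj 1
    have σdef : ∃ σ : A →ₗ[K] (Fin (r 0) → A ⊗[K] A),
        ∀ m : A, σ m = (lmulT K A m).compLeft (Fin (r 0)) y₀ := by
      refine ⟨⟨⟨fun m => (lmulT K A m).compLeft (Fin (r 0)) y₀, ?_⟩, ?_⟩, fun m => rfl⟩
      · intro m m'; funext k; simp [lmulT_add]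
      · intro c m; funext k; simp [lmulT_smul]
    obtain ⟨σ, hσ⟩ := σdef
    have eσ : ∀ m : A, e (σ m) = m := by
      intro m
      rw [hσ]
      have := LinearMap.congr_fun (hlact m) y₀
      simp only [LinearMap.comp_apply] at this
      rw [this, LinearMap.mulLeft_apply, hy₀, mul_one]
    have σl : ∀ (b m : A), σ (b * m) = (lmulT K A b).compLeft (Fin (r 0)) (σ m) := by
      intro b m
      rw [hσ, hσ]
      funext k
      simp only [compLeftApp]
      exact (LinearMap.congr_fun (lmulT_comp b m) (y₀ k)).symm
    have P0 : ∃ h₀ : (Fin (r 0) → A ⊗[K] A) →ₗ[K] (Fin (r 1) → A ⊗[K] A),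
        (∀ b : A, h₀ ∘ₗ (lmulT K A b).compLeft (Fin (r 0)) =
          (lmulT K A b).compLeft (Fin (r 1)) ∘ₗ h₀) ∧
        ∀ x, d 0 (h₀ x) = x - σ (e x) := by
      obtain ⟨g, hg1, hg2⟩ := liftL_exists hproj (LinearMap.id - σ ∘ₗ e) (d 0)
        (fun b => by
          apply LinearMap.ext; intro x
          simp only [LinearMap.sub_apply, LinearMap.comp_apply, LinearMap.id_apply]
          have he := LinearMap.congr_fun (hlact b) x
          simp only [LinearMap.comp_apply] at he
          rw [he, LinearMap.mulLeft_apply, σl, map_sub])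
        (hl 0)
        (by
          rintro _ ⟨x, rfl⟩
          rw [← h0 hn, LinearMap.mem_ker]
          simp only [LinearMap.sub_apply, LinearMap.comp_apply, LinearMap.id_apply, map_sub]
          rw [eσ, sub_self])
      exact ⟨g, hg2, fun x => LinearMap.congr_fun hg1 x⟩
    have Psucc : ∀ m : ℕ, m + 1 < n →
        ∃ (g : (Fin (r m) → A ⊗[K] A) →ₗ[K] (Fin (r (m+1)) → A ⊗[K] A))
          (hh : (Fin (r (m+1)) → A ⊗[K] A) →ₗ[K] (Fin (r (m+2)) → A ⊗[K] A)),
          (∀ b : A, g ∘ₗ (lmulT K A b).compLeft (Fin (r m)) =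
            (lmulT K A b).compLeft (Fin (r (m+1))) ∘ₗ g) ∧
          (∀ b : A, hh ∘ₗ (lmulT K A b).compLeft (Fin (r (m+1))) =
            (lmulT K A b).compLeft (Fin (r (m+2))) ∘ₗ hh) ∧
          ∀ x, d (m+1) (hh x) = x - g (d m x) := by
      intro m
      induction m with
      | zero =>
        intro h1
        obtain ⟨h₀, h₀comm, h₀id⟩ := P0
        obtain ⟨hh, hh1, hh2⟩ := liftL_exists hproj (LinearMap.id - h₀ ∘ₗ d 0) (d 1)
          (fun b => by
            apply LinearMap.ext; intro x
            simp only [LinearMap.sub_apply, LinearMap.comp_apply, LinearMap.id_apply]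
            have hd := LinearMap.congr_fun (hl 0 b) x
            simp only [LinearMap.comp_apply] at hd
            have hc := LinearMap.congr_fun (h₀comm b) (d 0 x)
            simp only [LinearMap.comp_apply] at hc
            rw [hd, hc, map_sub])
          (hl 1)
          (by
            rintro _ ⟨x, rfl⟩
            rw [← hstep 0 h1, LinearMap.mem_ker]
            simp only [LinearMap.sub_apply, LinearMap.comp_apply, LinearMap.id_apply, map_sub]
            rw [h₀id (d 0 x)]
            have he : e (d 0 x) = 0 := by
              have : d 0 x ∈ LinearMap.range (d 0) := ⟨_, rfl⟩
              rw [← h0 hn] at this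
              exact this
            rw [he, map_zero, sub_zero, sub_self])
        exact ⟨h₀, hh, h₀comm, hh2, fun x => LinearMap.congr_fun hh1 x⟩
      | succ m IH =>
        intro h2
        obtain ⟨g, hh, hgc, hhc, hid⟩ := IH (by omega)
        obtain ⟨hh', hh'1, hh'2⟩ := liftL_exists hproj (LinearMap.id - hh ∘ₗ d (m+1)) (d (m+2))
          (fun b => by
            apply LinearMap.ext; intro x
            simp only [LinearMap.sub_apply, LinearMap.comp_apply, LinearMap.id_apply]
            have hd := LinearMap.congr_fun (hl (m+1) b) x
            simp only [LinearMap.comp_apply] at hd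
            have hc := LinearMap.congr_fun (hhc b) (d (m+1) x)
            simp only [LinearMap.comp_apply] at hc
            rw [hd, hc, map_sub])
          (hl (m+2))
          (by
            rintro _ ⟨x, rfl⟩
            rw [← hstep (m+1) h2, LinearMap.mem_ker]
            simp only [LinearMap.sub_apply, LinearMap.comp_apply, LinearMap.id_apply, map_sub]
            rw [hid (d (m+1) x)]
            have hzero : d m (d (m+1) x) = 0 := by
              have : d (m+1) x ∈ LinearMap.range (d (m+1)) := ⟨_, rfl⟩
              rw [← hstep m (by omega)] at this
              exact this
            rw [hzero, map_zero, sub_zero, sub_self])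
        exact ⟨hh, hh', hhc, hh'2, fun x => LinearMap.congr_fun hh'1 x⟩
    obtain ⟨g, hh, hgc, hhc, hid⟩ := Psucc i hi
    apply le_antisymm
    · intro x hx
      have hx' : Dk i (fun l => unop (x l)) = 0 := by
        have hx0 : (fun k => op (Dk i (fun l => unop (x l)) k)) = (0 : Fin (r i) → Aᵐᵒᵖ) := hx
        funext k
        have := congrFun hx0 k
        simpa using this
      set u : Fin (r (i+1)) → A := fun l => unop (x l) with hu
      set y := (sR K A).compLeft (Fin (r (i+1))) u with hy
      have hΦy : (phiR ε).compLeft (Fin (r (i+1))) y = u := PS _ u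
      have hid' := hid y
      have h2 : (phiR ε).compLeft (Fin (r (i+1))) (d (i+1) (hh y)) =
          u - (phiR ε).compLeft (Fin (r (i+1))) (g (d i y)) := by
        rw [hid', map_sub, hΦy]
      have hzero : (phiR ε).compLeft (Fin (r (i+1))) (g (d i y)) = 0 := by
        rw [pushR ε g hgc (d i y)]
        have : (phiR ε).compLeft (Fin (r i)) (d i y) = 0 := hx'
        rw [this]
        simp
      rw [hzero, sub_zero] at h2
      rw [pushd (i+1) (hh y)] at h2
      refine ⟨fun k => op ((phiR ε).compLeft (Fin (r (i+2))) (hh y) k), ?_⟩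
      show (fun k => op (Dk (i+1)
        (fun l => unop (op ((phiR ε).compLeft (Fin (r (i+2))) (hh y) l))) k)) = x
      have hun : (fun l => unop (op ((phiR ε).compLeft (Fin (r (i+2))) (hh y) l))) =
          (phiR ε).compLeft (Fin (r (i+2))) (hh y) := rfl
      rw [hun, h2]
      funext k
      show op (u k) = x k
      rw [hu]
      exact MulOpposite.op_unop (x k)
    · rintro _ ⟨z, rfl⟩
      show (fun k => op (Dk i (fun l =>
        unop ((fun k' => op (Dk (i+1) (fun l' => unop (z l')) k')) l)) k)) = 0
      have hun : (fun l => unop ((fun k' => op (Dk (i+1) (fun l' => unop (z l')) k')) l)) =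
          Dk (i+1) (fun l' => unop (z l')) := rfl
      rw [hun]
      have step1 : Dk i (Dk (i+1) (fun l' => unop (z l'))) = 0 := by
        show Dk i ((phiR ε).compLeft _ (d (i+1) ((sR K A).compLeft _ (fun l' => unop (z l'))))) = 0
        rw [← pushd i]
        have : d i (d (i+1) ((sR K A).compLeft (Fin (r (i+2))) (fun l' => unop (z l')))) = 0 := by
          have hmem : d (i+1) ((sR K A).compLeft (Fin (r (i+2))) (fun l' => unop (z l'))) ∈
              LinearMap.range (d (i+1)) := ⟨_, rfl⟩
          rw [← hstep i hi] at hmem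
          exact hmem
        rw [this, map_zero]
      rw [step1]
      funext k
      simp

end RightCore


/-- If `A` is a `K`-algebra which is projective as a `K`-module, with
augmentation `ε`, and `A` is of type bi-`FP n`, then `A` is of type left-`FP n` and of type
right-`FP n`. -/
theorem biFP_imp_leftFP_and_rightFP_of_projective
    (K : Type*) [CommRing K] (A : Type*) [Ring A] [Algebra K A]
    (hproj : Module.Projective K A) (ε : A →ₐ[K] K) (n : ℕ)
    (h : BiFP K A n) :
    LeftFP A ε.toRingHom n ∧ RightFP A ε.toRingHom n := by
  exact ⟨left_core hproj ε n h, right_core hproj ε n h⟩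
end

section
/- Let K be a principal ideal domain, A a K-algebra which is flat as a K-module, with augmentation ε: A → K, and n ≥ 0. If A is of type left-FP_n and of type right-FP_n, then A is of type weak bi-FP_n. -/
open Function LinearMap TensorProduct MulOpposite

set_option maxHeartbeats 1000000
set_option synthInstance.maxHeartbeats 400000

universe u
section Assembly
variable {K : Type*} [CommRing K]
variable (C : ℕ → ℕ → Type u) [∀ i j, AddCommGroup (C i j)] [∀ i j, Module K (C i j)]

abbrev TotIdx (m : ℕ) : Type := {p : ℕ × ℕ // p.1 + p.2 = m}

abbrev Tot (m : ℕ) : Type u := ∀ p : TotIdx m, C p.1.1 p.1.2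

variable (dh : ∀ i j, C (i+1) j →ₗ[K] C i j) (dv : ∀ i j, C i (j+1) →ₗ[K] C i j)

noncomputable def totD (m : ℕ) : Tot C (m+1) →ₗ[K] Tot C m :=
  LinearMap.pi fun p => dh p.1.1 p.1.2 ∘ₗ
      LinearMap.proj (⟨(p.1.1+1, p.1.2), by have := p.2; omega⟩ : TotIdx (m+1))
    + ((-1:ℤ)^p.1.1) • (dv p.1.1 p.1.2 ∘ₗ
      LinearMap.proj (⟨(p.1.1, p.1.2+1), by have := p.2; omega⟩ : TotIdx (m+1)))

theorem totD_apply (m : ℕ) (z : Tot C (m+1)) (i j : ℕ) (h : i + j = m) :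
    totD C dh dv m z ⟨(i,j), h⟩ = dh i j (z ⟨(i+1, j), by omega⟩)
      + ((-1:ℤ)^i) • dv i j (z ⟨(i, j+1), by omega⟩) := rfl

theorem totD_comp (m : ℕ)
    (hdhdh : ∀ i j, i + j = m → ∀ x, dh i j (dh (i+1) j x) = 0)
    (hdvdv : ∀ i j, i + j = m → ∀ x, dv i j (dv i (j+1) x) = 0)
    (hcomm : ∀ i j x, dh i j (dv (i+1) j x) = dv i j (dh i (j+1) x))
    (w : Tot C (m+2)) : totD C dh dv m (totD C dh dv (m+1) w) = 0 := by
  funext p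
  obtain ⟨⟨i, j⟩, hp⟩ := p
  rw [totD_apply, totD_apply, totD_apply]
  rw [map_add, map_add, map_zsmul, map_zsmul, hdhdh i j hp, hdvdv i j hp, hcomm]
  show _ = (0 : C i j)
  rw [pow_succ, mul_comm, mul_smul, neg_one_zsmul, smul_zero, add_zero, zero_add]
  abel
end Assembly

section Assembly2
variable {K : Type*} [CommRing K]
variable (C : ℕ → ℕ → Type u) [∀ i j, AddCommGroup (C i j)] [∀ i j, Module K (C i j)]
variable (dh : ∀ i j, C (i+1) j →ₗ[K] C i j) (dv : ∀ i j, C i (j+1) →ₗ[K] C i j)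
variable (Q : ℕ → Type u) [∀ j, AddCommGroup (Q j)] [∀ j, Module K (Q j)]
variable (q : ∀ j, Q (j+1) →ₗ[K] Q j) (η : ∀ j, C 0 j →ₗ[K] Q j)

theorem ker_totD (m : ℕ)
    (hηdv : ∀ j x, η j (dv 0 j x) = q j (η (j+1) x))
    (hηdh : ∀ x : C 1 m, η m (dh 0 m x) = 0)
    (hqex : ∀ u : Q (m+1), q m u = 0 → ∃ v, q (m+1) v = u)
    (hηsurj : Function.Surjective (η (m+2)))
    (hηex : ∀ y : C 0 (m+1), η (m+1) y = 0 → ∃ c, dh 0 (m+1) c = y)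
    (hrowex : ∀ i j, i + j = m → ∀ y : C (i+1) j, dh i j y = 0 → ∃ c, dh (i+1) j c = y)
    (hcomm : ∀ i j x, dh i j (dv (i+1) j x) = dv i j (dh i (j+1) x))
    (hdvdv : ∀ i j, i + j = m → ∀ x, dv i j (dv i (j+1) x) = 0)
    (z : Tot C (m+1)) (hz : totD C dh dv m z = 0) :
    ∃ w, totD C dh dv (m+1) w = z := by
  have hzeq : ∀ i j (h : i + j = m),
      dh i j (z ⟨(i+1, j), by omega⟩) + ((-1:ℤ)^i) • dv i j (z ⟨(i, j+1), by omega⟩) = 0 := by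
    intro i j h
    have := congrFun hz ⟨(i, j), h⟩
    rwa [totD_apply] at this
  have main : ∀ k, k ≤ m + 2 → ∃ w : Tot C (m+2), ∀ i j (h : i + j = m + 1), i < k →
      dh i j (w ⟨(i+1, j), by omega⟩) + ((-1:ℤ)^i) • dv i j (w ⟨(i, j+1), by omega⟩)
        = z ⟨(i, j), h⟩ := by
    intro k
    induction k with
    | zero => exact fun _ => ⟨0, fun i j h hik => absurd hik (Nat.not_lt_zero i)⟩
    | succ k ih =>
      intro hk
      obtain ⟨w, hw⟩ := ih (by omega)
      match k, hk with
      | 0, _ =>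
        -- base step: use the Q-column
        set z0 : C 0 (m+1) := z ⟨(0, m+1), by omega⟩ with hz0
        have h1 : q m (η (m+1) z0) = 0 := by
          have h2 := hzeq 0 m (by omega)
          rw [pow_zero, one_smul] at h2
          have h3 : dv 0 m (z ⟨(0, m+1), by omega⟩) = - dh 0 m (z ⟨(1, m), by omega⟩) := by
            rw [eq_neg_iff_add_eq_zero, add_comm]; exact h2
          rw [← hηdv, h3, map_neg, hηdh, neg_zero]
        obtain ⟨v, hv⟩ := hqex _ h1
        obtain ⟨w0, hw0⟩ := hηsurj v
        have h4 : η (m+1) (z0 - dv 0 (m+1) w0) = 0 := by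
          rw [map_sub, hηdv, hw0, hv, sub_self]
        obtain ⟨c, hc⟩ := hηex _ h4
        refine ⟨Function.update (Function.update w ⟨(0, m+2), by omega⟩ w0)
          ⟨(1, m+1), by omega⟩ c, ?_⟩
        intro i j h hik
        have hi0 : i = 0 := by omega
        subst hi0
        have hj : j = m + 1 := by omega
        subst hj
        rw [Function.update_self, Function.update_of_ne (by simp),
          Function.update_self, hc, pow_zero, one_smul, sub_add_cancel]
      | (k+1 : ℕ), _ =>
        -- inductive step: use row exactness
        have hkm : k + 1 ≤ m + 1 := by omega
        set j := m - k with hj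
        have hjk : k + 1 + j = m + 1 := by omega
        have hkj : k + j = m := by omega
        set y : C (k+1) j := z ⟨(k+1, j), hjk⟩
          - ((-1:ℤ)^(k+1)) • dv (k+1) j (w ⟨(k+1, j+1), by omega⟩) with hy
        have hdy : dh k j y = 0 := by
          rw [hy, map_sub, map_zsmul, hcomm]
          have e1 := hw k (j+1) (by omega) (by omega)
          have e2 : dh k (j+1) (w ⟨(k+1, j+1), by omega⟩)
              = z ⟨(k, j+1), by omega⟩
                - ((-1:ℤ)^k) • dv k (j+1) (w ⟨(k, j+2), by omega⟩) := by
            rw [eq_sub_iff_add_eq]; exact e1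
          rw [e2, map_sub, map_zsmul, hdvdv k j hkj, smul_zero, sub_zero]
          have e3 := hzeq k j hkj
          have e4 : dh k j (z ⟨(k+1, j), by omega⟩)
              = - (((-1:ℤ)^k) • dv k j (z ⟨(k, j+1), by omega⟩)) := by
            rw [eq_neg_iff_add_eq_zero]; exact e3
          rw [e4, pow_succ, mul_comm, mul_smul, neg_one_zsmul]
          exact sub_self _
        obtain ⟨c, hc⟩ := hrowex k j hkj y hdy
        refine ⟨Function.update w ⟨(k+2, j), by omega⟩ c, ?_⟩
        intro i j' h hik
        rcases Nat.lt_or_ge i (k+1) with hik' | hik'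
        · rw [Function.update_of_ne (by simp only [ne_eq, Subtype.mk.injEq, Prod.mk.injEq, not_and]; omega),
            Function.update_of_ne (by simp only [ne_eq, Subtype.mk.injEq, Prod.mk.injEq, not_and]; omega)]
          exact hw i j' h hik'
        · have hi : i = k + 1 := by omega
          subst hi
          have hj' : j' = j := by omega
          subst hj'
          rw [Function.update_self,
            Function.update_of_ne (by simp only [ne_eq, Subtype.mk.injEq, Prod.mk.injEq, not_and]; omega), hc, hy,
            sub_add_cancel]
  obtain ⟨w, hw⟩ := main (m+2) le_rfl
  refine ⟨w, ?_⟩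
  funext p
  obtain ⟨⟨i, j⟩, hp⟩ := p
  rw [totD_apply]
  exact hw i j hp (by omega)

theorem totE_ker (M : Type*) [AddCommGroup M] [Module K M] (εQ : Q 0 →ₗ[K] M)
    (hηdv : ∀ j x, η j (dv 0 j x) = q j (η (j+1) x))
    (hqex : ∀ u : Q 0, εQ u = 0 → ∃ v, q 0 v = u)
    (hηsurj : Function.Surjective (η 1))
    (hηex : ∀ y : C 0 0, η 0 y = 0 → ∃ c, dh 0 0 c = y)
    (z : Tot C 0) (hz : εQ (η 0 (z ⟨(0,0), rfl⟩)) = 0) :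
    ∃ w, totD C dh dv 0 w = z := by
  obtain ⟨v, hv⟩ := hqex _ hz
  obtain ⟨w0, hw0⟩ := hηsurj v
  have h4 : η 0 (z ⟨(0,0), rfl⟩ - dv 0 0 w0) = 0 := by
    rw [map_sub, hηdv, hw0, hv, sub_self]
  obtain ⟨c, hc⟩ := hηex _ h4
  refine ⟨Function.update (Function.update 0 ⟨(0, 1), rfl⟩ w0) ⟨(1, 0), rfl⟩ c, ?_⟩
  funext p
  obtain ⟨⟨i, j⟩, hp⟩ := p
  have hi : i = 0 := by omega
  subst hi
  have hj : j = 0 := by omega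
  subst hj
  rw [totD_apply, Function.update_self,
    Function.update_of_ne (by simp only [ne_eq, Subtype.mk.injEq, Prod.mk.injEq, not_and]; omega),
    Function.update_self, hc, pow_zero, one_smul, sub_add_cancel]

theorem totE_comp (M : Type*) [AddCommGroup M] [Module K M] (εQ : Q 0 →ₗ[K] M)
    (hηdv : ∀ j x, η j (dv 0 j x) = q j (η (j+1) x))
    (hηdh : ∀ x : C 1 0, η 0 (dh 0 0 x) = 0)
    (hεq : ∀ u, εQ (q 0 u) = 0)
    (w : Tot C 1) : εQ (η 0 (totD C dh dv 0 w ⟨(0,0), rfl⟩)) = 0 := by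
  rw [totD_apply, pow_zero, one_smul, map_add, hηdh, hηdv, zero_add, hεq]

end Assembly2

section ChunkA
variable (K A : Type*) [CommRing K] [Ring A] [Algebra K A]

noncomputable def tensorPiEquiv (p q : ℕ) :
    ((Fin p → A) ⊗[K] (Fin q → A)) ≃ₗ[K] (Fin p × Fin q → A ⊗[K] A) :=
  (TensorProduct.congr (Finsupp.linearEquivFunOnFinite K A (Fin p)).symm
    (Finsupp.linearEquivFunOnFinite K A (Fin q)).symm).trans
  ((finsuppTensorFinsupp K K A A (Fin p) (Fin q)).trans
    (Finsupp.linearEquivFunOnFinite K (A ⊗[K] A) (Fin p × Fin q)))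

lemma tensorPiEquiv_tmul (p q : ℕ) (x : Fin p → A) (y : Fin q → A) (k : Fin p) (l : Fin q) :
    tensorPiEquiv K A p q (x ⊗ₜ y) (k, l) = x k ⊗ₜ y l := by
  simp [tensorPiEquiv, Finsupp.linearEquivFunOnFinite, finsuppTensorFinsupp_apply]
  show (finsuppTensorFinsupp K K A A (Fin p) (Fin q))
    (Finsupp.equivFunOnFinite.symm x ⊗ₜ[K] Finsupp.equivFunOnFinite.symm y) (k, l) = _
  rw [finsuppTensorFinsupp_apply]
  rfl

def totIdxEquivFin (m : ℕ) : {p : ℕ × ℕ // p.1 + p.2 = m} ≃ Fin (m+1) where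
  toFun p := ⟨p.1.1, by have := p.2; omega⟩
  invFun i := ⟨(i.1, m - i.1), by have := i.2; omega⟩
  left_inv p := by
    obtain ⟨⟨i, j⟩, hp⟩ := p
    have hp' : i + j = m := hp
    simp only [Subtype.mk.injEq, Prod.mk.injEq]
    exact ⟨trivial, by omega⟩
  right_inv i := rfl

noncomputable instance totIdxFintype (m : ℕ) : Fintype {p : ℕ × ℕ // p.1 + p.2 = m} :=
  Fintype.ofEquiv _ (totIdxEquivFin m).symm

end ChunkA

section TensorFacts
variable {K : Type*} [CommRing K]
variable {M M' M'' N N' : Type*}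
  [AddCommGroup M] [AddCommGroup M'] [AddCommGroup M''] [AddCommGroup N] [AddCommGroup N']
  [Module K M] [Module K M'] [Module K M''] [Module K N] [Module K N']

/-- `η ∘ dv = q ∘ η` generically. -/
lemma lid_rTensor_lTensor (e : M →ₗ[K] K) (g : N' →ₗ[K] N) (x : M ⊗[K] N') :
    (TensorProduct.lid K N) (rTensor N e (lTensor M g x))
      = g ((TensorProduct.lid K N') (rTensor N' e x)) := by
  have : (TensorProduct.lid K N).toLinearMap ∘ₗ rTensor N e ∘ₗ lTensor M g
      = g ∘ₗ (TensorProduct.lid K N').toLinearMap ∘ₗ rTensor N' e := by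
    apply TensorProduct.ext'
    intro m y
    simp
  exact congrFun (congrArg DFunLike.coe this) x

lemma rTensor_comp_zero (f : M' →ₗ[K] M) (g : M →ₗ[K] M'') (h : ∀ x, g (f x) = 0)
    (x : M' ⊗[K] N) : rTensor N g (rTensor N f x) = 0 := by
  rw [← LinearMap.comp_apply, ← rTensor_comp]
  have : g ∘ₗ f = 0 := LinearMap.ext h
  rw [this, rTensor_zero, LinearMap.zero_apply]

lemma lTensor_comp_zero (f : M' →ₗ[K] M) (g : M →ₗ[K] M'') (h : ∀ x, g (f x) = 0)
    (x : N ⊗[K] M') : lTensor N g (lTensor N f x) = 0 := by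
  rw [← LinearMap.comp_apply, ← lTensor_comp]
  have : g ∘ₗ f = 0 := LinearMap.ext h
  rw [this, lTensor_zero, LinearMap.zero_apply]

lemma lid_rTensor_surjective (e : M →ₗ[K] K) (he : Function.Surjective e) :
    Function.Surjective (fun x : M ⊗[K] N => TensorProduct.lid K N (rTensor N e x)) := by
  intro y
  obtain ⟨m, hm⟩ := he 1
  exact ⟨m ⊗ₜ y, by simp [hm]⟩

lemma flat_rTensor_step [Module.Flat K N] (f : M' →ₗ[K] M) (g : M →ₗ[K] M'')
    (hex : ∀ x, g x = 0 ↔ ∃ c, f c = x) (y : M ⊗[K] N) (hy : rTensor N g y = 0) :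
    ∃ c, rTensor N f c = y := by
  have hexact : Function.Exact f g := by
    intro x
    rw [hex x]
    exact Iff.rfl
  exact (Module.Flat.rTensor_exact N hexact y).mp hy

instance flat_pi_fin {A : Type*} [Ring A] [Algebra K A] [Module.Flat K A] (q : ℕ) :
    Module.Flat K (Fin q → A) :=
  Module.Flat.of_linearEquiv
    (DirectSum.linearEquivFunOnFintype K (Fin q) (fun _ => A)).symm

end TensorFacts

section BComplex
variable (K A : Type*) [CommRing K] [Ring A] [Algebra K A] (r s : ℕ → ℕ)

abbrev CB (i j : ℕ) : Type _ := (Fin (r i) → A) ⊗[K] (Fin (s j) → A)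

variable (Dh : ∀ i, (Fin (r (i+1)) → A) →ₗ[K] (Fin (r i) → A))
variable (Dv : ∀ j, (Fin (s (j+1)) → A) →ₗ[K] (Fin (s j) → A))
variable (eK : (Fin (r 0) → A) →ₗ[K] K)

noncomputable def dhB (i j : ℕ) : CB K A r s (i+1) j →ₗ[K] CB K A r s i j :=
  rTensor _ (Dh i)

noncomputable def dvB (i j : ℕ) : CB K A r s i (j+1) →ₗ[K] CB K A r s i j :=
  lTensor _ (Dv j)

noncomputable def etaB (j : ℕ) : CB K A r s 0 j →ₗ[K] (Fin (s j) → A) :=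
  (TensorProduct.lid K _).toLinearMap ∘ₗ rTensor _ eK

noncomputable def lactB (i j : ℕ) (a : A) : CB K A r s i j →ₗ[K] CB K A r s i j :=
  rTensor _ ((LinearMap.mulLeft K a).compLeft (Fin (r i)))

noncomputable def ractB (i j : ℕ) (b : A) : CB K A r s i j →ₗ[K] CB K A r s i j :=
  lTensor _ ((LinearMap.mulRight K b).compLeft (Fin (s j)))

noncomputable def LactB (m : ℕ) (a : A) : Tot (CB K A r s) m →ₗ[K] Tot (CB K A r s) m :=
  LinearMap.pi fun p => lactB K A r s p.1.1 p.1.2 a ∘ₗ LinearMap.proj p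

noncomputable def RactB (m : ℕ) (b : A) : Tot (CB K A r s) m →ₗ[K] Tot (CB K A r s) m :=
  LinearMap.pi fun p => ractB K A r s p.1.1 p.1.2 b ∘ₗ LinearMap.proj p

def JB (m : ℕ) : Type := Σ p : TotIdx m, Fin (r p.1.1) × Fin (s p.1.2)

noncomputable instance (m : ℕ) : Fintype (JB r s m) := by
  unfold JB; infer_instance

noncomputable def tB (m : ℕ) : ℕ := Fintype.card (JB r s m)

noncomputable def PhiB (m : ℕ) :
    Tot (CB K A r s) m ≃ₗ[K] (Fin (tB r s m) → A ⊗[K] A) :=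
  (LinearEquiv.piCongrRight fun p : TotIdx m =>
      tensorPiEquiv K A (r p.1.1) (s p.1.2)).trans
  (((LinearEquiv.piCurry K fun (p : TotIdx m)
        (_ : Fin (r p.1.1) × Fin (s p.1.2)) => A ⊗[K] A).symm).trans
    (LinearEquiv.funCongrLeft K (A ⊗[K] A) (Fintype.equivFin (JB r s m)).symm))

lemma PhiB_apply (m : ℕ) (z : Tot (CB K A r s) m) (u : Fin (tB r s m)) :
    PhiB K A r s m z u
      = tensorPiEquiv K A _ _ (z ((Fintype.equivFin (JB r s m)).symm u).1)
          ((Fintype.equivFin (JB r s m)).symm u).2 := rfl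

lemma psi_lact (p q : ℕ) (a : A) (w : (Fin p → A) ⊗[K] (Fin q → A)) (kl : Fin p × Fin q) :
    tensorPiEquiv K A p q (rTensor _ ((LinearMap.mulLeft K a).compLeft (Fin p)) w) kl
      = lmulT K A a (tensorPiEquiv K A p q w kl) := by
  obtain ⟨k, l⟩ := kl
  induction w using TensorProduct.induction_on with
  | zero => simp only [map_zero, Pi.zero_apply]
  | tmul x y => simp [tensorPiEquiv_tmul, lmulT, Function.comp]
  | add w1 w2 h1 h2 => simp only [map_add, Pi.add_apply, h1, h2]

lemma psi_ract (p q : ℕ) (b : A) (w : (Fin p → A) ⊗[K] (Fin q → A)) (kl : Fin p × Fin q) :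
    tensorPiEquiv K A p q (lTensor _ ((LinearMap.mulRight K b).compLeft (Fin q)) w) kl
      = rmulT K A b (tensorPiEquiv K A p q w kl) := by
  obtain ⟨k, l⟩ := kl
  induction w using TensorProduct.induction_on with
  | zero => simp only [map_zero, Pi.zero_apply]
  | tmul x y => simp [tensorPiEquiv_tmul, rmulT, Function.comp]
  | add w1 w2 h1 h2 => simp only [map_add, Pi.add_apply, h1, h2]

lemma Phi_lact (m : ℕ) (a : A) (z : Tot (CB K A r s) m) :
    PhiB K A r s m (LactB K A r s m a z)
      = (lmulT K A a).compLeft (Fin (tB r s m)) (PhiB K A r s m z) := by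
  funext u
  show PhiB K A r s m (LactB K A r s m a z) u = lmulT K A a (PhiB K A r s m z u)
  rw [PhiB_apply, PhiB_apply]
  exact psi_lact K A _ _ a _ _

lemma Phi_ract (m : ℕ) (b : A) (z : Tot (CB K A r s) m) :
    PhiB K A r s m (RactB K A r s m b z)
      = (rmulT K A b).compLeft (Fin (tB r s m)) (PhiB K A r s m z) := by
  funext u
  show PhiB K A r s m (RactB K A r s m b z) u = rmulT K A b (PhiB K A r s m z u)
  rw [PhiB_apply, PhiB_apply]
  exact psi_ract K A _ _ b _ _

end BComplex

section BComplex2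
variable (K A : Type*) [CommRing K] [Ring A] [Algebra K A] (r s : ℕ → ℕ)
variable (Dh : ∀ i, (Fin (r (i+1)) → A) →ₗ[K] (Fin (r i) → A))
variable (Dv : ∀ j, (Fin (s (j+1)) → A) →ₗ[K] (Fin (s j) → A))
variable (eK : (Fin (r 0) → A) →ₗ[K] K) (fK : (Fin (s 0) → A) →ₗ[K] K)

lemma rTensor_lTensor_comm {M M' N N' : Type*}
    [AddCommGroup M] [AddCommGroup M'] [AddCommGroup N] [AddCommGroup N']
    [Module K M] [Module K M'] [Module K N] [Module K N']
    (f : M' →ₗ[K] M) (g : N' →ₗ[K] N) (x : M' ⊗[K] N') :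
    rTensor N f (lTensor M' g x) = lTensor M g (rTensor N' f x) := by
  rw [← LinearMap.comp_apply, ← LinearMap.comp_apply, rTensor_comp_lTensor,
    lTensor_comp_rTensor]

lemma dh_lact (hDh : ∀ i (a : A) x, Dh i (fun k => a * x k) = fun k => a * Dh i x k)
    (i j : ℕ) (a : A) (v : CB K A r s (i+1) j) :
    dhB K A r s Dh i j (lactB K A r s (i+1) j a v)
      = lactB K A r s i j a (dhB K A r s Dh i j v) := by
  have hcomp : Dh i ∘ₗ (LinearMap.mulLeft K a).compLeft (Fin (r (i+1)))
      = ((LinearMap.mulLeft K a).compLeft (Fin (r i))) ∘ₗ Dh i := by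
    refine LinearMap.ext fun x => ?_
    exact hDh i a x
  simp only [dhB, lactB]
  rw [← LinearMap.comp_apply, ← rTensor_comp, hcomp, rTensor_comp, LinearMap.comp_apply]

lemma dh_ract (i j : ℕ) (b : A) (v : CB K A r s (i+1) j) :
    dhB K A r s Dh i j (ractB K A r s (i+1) j b v)
      = ractB K A r s i j b (dhB K A r s Dh i j v) := by
  simp only [dhB, ractB]
  rw [rTensor_lTensor_comm]

lemma dv_lact (i j : ℕ) (a : A) (v : CB K A r s i (j+1)) :
    dvB K A r s Dv i j (lactB K A r s i (j+1) a v)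
      = lactB K A r s i j a (dvB K A r s Dv i j v) := by
  simp only [dvB, lactB]
  rw [← rTensor_lTensor_comm]

lemma dv_ract (hDv : ∀ j (b : A) y, Dv j (fun l => y l * b) = fun l => Dv j y l * b)
    (i j : ℕ) (b : A) (v : CB K A r s i (j+1)) :
    dvB K A r s Dv i j (ractB K A r s i (j+1) b v)
      = ractB K A r s i j b (dvB K A r s Dv i j v) := by
  have hcomp : Dv j ∘ₗ (LinearMap.mulRight K b).compLeft (Fin (s (j+1)))
      = ((LinearMap.mulRight K b).compLeft (Fin (s j))) ∘ₗ Dv j := by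
    refine LinearMap.ext fun y => ?_
    exact hDv j b y
  simp only [dvB, ractB]
  rw [← LinearMap.comp_apply, ← lTensor_comp, hcomp, lTensor_comp, LinearMap.comp_apply]

lemma totD_Lact (hDh : ∀ i (a : A) x, Dh i (fun k => a * x k) = fun k => a * Dh i x k)
    (m : ℕ) (a : A) (z : Tot (CB K A r s) (m+1)) :
    totD (CB K A r s) (dhB K A r s Dh) (dvB K A r s Dv) m (LactB K A r s (m+1) a z)
      = LactB K A r s m a
          (totD (CB K A r s) (dhB K A r s Dh) (dvB K A r s Dv) m z) := by
  funext p
  obtain ⟨⟨i, j⟩, hp⟩ := p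
  rw [totD_apply]
  show dhB K A r s Dh i j (lactB K A r s (i+1) j a (z ⟨(i+1, j), by omega⟩))
      + ((-1:ℤ)^i) • dvB K A r s Dv i j (lactB K A r s i (j+1) a (z ⟨(i, j+1), by omega⟩))
    = lactB K A r s i j a
        (totD (CB K A r s) (dhB K A r s Dh) (dvB K A r s Dv) m z ⟨(i, j), hp⟩)
  rw [totD_apply, map_add, map_zsmul, dh_lact K A r s Dh hDh, dv_lact K A r s Dv]

lemma totD_Ract (hDv : ∀ j (b : A) y, Dv j (fun l => y l * b) = fun l => Dv j y l * b)
    (m : ℕ) (b : A) (z : Tot (CB K A r s) (m+1)) :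
    totD (CB K A r s) (dhB K A r s Dh) (dvB K A r s Dv) m (RactB K A r s (m+1) b z)
      = RactB K A r s m b
          (totD (CB K A r s) (dhB K A r s Dh) (dvB K A r s Dv) m z) := by
  funext p
  obtain ⟨⟨i, j⟩, hp⟩ := p
  rw [totD_apply]
  show dhB K A r s Dh i j (ractB K A r s (i+1) j b (z ⟨(i+1, j), by omega⟩))
      + ((-1:ℤ)^i) • dvB K A r s Dv i j (ractB K A r s i (j+1) b (z ⟨(i, j+1), by omega⟩))
    = ractB K A r s i j b
        (totD (CB K A r s) (dhB K A r s Dh) (dvB K A r s Dv) m z ⟨(i, j), hp⟩)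
  rw [totD_apply, map_add, map_zsmul, dh_ract K A r s Dh, dv_ract K A r s Dv hDv]

lemma E_lact (ε : A →ₐ[K] K)
    (heq : ∀ (a : A) x, eK (fun k => a * x k) = ε a * eK x)
    (a : A) (w : CB K A r s 0 0) :
    fK (etaB K A r s eK 0 (lactB K A r s 0 0 a w))
      = ε a * fK (etaB K A r s eK 0 w) := by
  have h : (fK ∘ₗ etaB K A r s eK 0 ∘ₗ lactB K A r s 0 0 a)
      = ε a • (fK ∘ₗ etaB K A r s eK 0) := by
    apply TensorProduct.ext'
    intro x y
    have hx : eK ((LinearMap.mulLeft K a).compLeft (Fin (r 0)) x) = ε a * eK x := by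
      exact heq a x
    simp [etaB, lactB, hx, smul_eq_mul, mul_assoc, mul_smul]
  have := congrFun (congrArg DFunLike.coe h) w
  simpa [smul_eq_mul] using this

lemma E_ract (ε : A →ₐ[K] K)
    (hfq : ∀ (b : A) y, fK (fun l => y l * b) = ε b * fK y)
    (b : A) (w : CB K A r s 0 0) :
    fK (etaB K A r s eK 0 (ractB K A r s 0 0 b w))
      = ε b * fK (etaB K A r s eK 0 w) := by
  have h : (fK ∘ₗ etaB K A r s eK 0 ∘ₗ ractB K A r s 0 0 b)
      = ε b • (fK ∘ₗ etaB K A r s eK 0) := by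
    apply TensorProduct.ext'
    intro x y
    have hy : fK ((LinearMap.mulRight K b).compLeft (Fin (s 0)) y) = ε b * fK y := by
      exact hfq b y
    simp [etaB, ractB, hy, smul_eq_mul, mul_smul]
    ring
  have := congrFun (congrArg DFunLike.coe h) w
  simpa [smul_eq_mul] using this

end BComplex2

section MainAux
variable {K A : Type*} [CommRing K] [Ring A] [Algebra K A]

theorem main_aux [Module.Flat K A] (ε : A →ₐ[K] K) (n : ℕ)
    (r : ℕ → ℕ) (Dh : ∀ i, (Fin (r (i+1)) → A) →ₗ[K] (Fin (r i) → A))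
    (eK : (Fin (r 0) → A) →ₗ[K] K)
    (s : ℕ → ℕ) (Dv : ∀ j, (Fin (s (j+1)) → A) →ₗ[K] (Fin (s j) → A))
    (fK : (Fin (s 0) → A) →ₗ[K] K)
    (hDh : ∀ i (a : A) x, Dh i (fun k => a * x k) = fun k => a * Dh i x k)
    (heq : ∀ (a : A) x, eK (fun k => a * x k) = ε a * eK x)
    (hDv : ∀ j (b : A) y, Dv j (fun l => y l * b) = fun l => Dv j y l * b)
    (hfq : ∀ (b : A) y, fK (fun l => y l * b) = ε b * fK y)
    (hesurj : Function.Surjective eK) (hfsurj : Function.Surjective fK)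
    (hee : 0 < n → ∀ x, (eK x = 0 ↔ ∃ c, Dh 0 c = x))
    (hff : 0 < n → ∀ y, (fK y = 0 ↔ ∃ c, Dv 0 c = y))
    (hdd : ∀ i, i+1 < n → ∀ x, (Dh i x = 0 ↔ ∃ c, Dh (i+1) c = x))
    (hdd' : ∀ j, j+1 < n → ∀ y, (Dv j y = 0 ↔ ∃ c, Dv (j+1) c = y)) :
    WeakBiFP K A ε n := by
  classical
  have hEsurj : ∀ (j : ℕ), Function.Surjective (etaB K A r s eK j) := by
    intro j y
    obtain ⟨m0, hm0⟩ := hesurj 1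
    exact ⟨m0 ⊗ₜ y, by simp [etaB, hm0]⟩
  have hηdv : ∀ j (x : CB K A r s 0 (j+1)),
      etaB K A r s eK j (dvB K A r s Dv 0 j x) = Dv j (etaB K A r s eK (j+1) x) := by
    intro j x
    simp only [etaB, dvB, LinearMap.coe_comp, Function.comp_apply, LinearEquiv.coe_coe]
    exact lid_rTensor_lTensor eK (Dv j) x
  have hηex : 0 < n → ∀ j (y : CB K A r s 0 j),
      etaB K A r s eK j y = 0 → ∃ c, dhB K A r s Dh 0 j c = y := by
    intro hn j y hy
    have hy' : rTensor (Fin (s j) → A) eK y = 0 := by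
      have h2 : (TensorProduct.lid K (Fin (s j) → A)) (rTensor _ eK y) = 0 := hy
      simpa using (LinearEquiv.map_eq_zero_iff _).mp h2
    exact flat_rTensor_step (Dh 0) eK (hee hn) y hy'
  have hηdh : 0 < n → ∀ j (x : CB K A r s 1 j),
      etaB K A r s eK j (dhB K A r s Dh 0 j x) = 0 := by
    intro hn j x
    have h0 : ∀ v, eK (Dh 0 v) = 0 := fun v => (hee hn _).mpr ⟨v, rfl⟩
    have h1 : rTensor (Fin (s j) → A) eK (rTensor _ (Dh 0) x) = 0 :=
      rTensor_comp_zero (Dh 0) eK h0 x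
    simp only [etaB, dhB, LinearMap.coe_comp, Function.comp_apply, LinearEquiv.coe_coe]
    rw [h1, map_zero]
  have hrowex : ∀ i j, i + 1 < n → ∀ y : CB K A r s (i+1) j,
      dhB K A r s Dh i j y = 0 → ∃ c, dhB K A r s Dh (i+1) j c = y :=
    fun i j hi y hy => flat_rTensor_step (Dh (i+1)) (Dh i) (hdd i hi) y hy
  have hdhdh0 : ∀ i j, i + 1 < n → ∀ x, dhB K A r s Dh i j (dhB K A r s Dh (i+1) j x) = 0 :=
    fun i j hi x => rTensor_comp_zero (Dh (i+1)) (Dh i) (fun v => (hdd i hi _).mpr ⟨v, rfl⟩) x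
  have hdvdv0 : ∀ i j, j + 1 < n → ∀ x, dvB K A r s Dv i j (dvB K A r s Dv i (j+1) x) = 0 :=
    fun i j hj x => lTensor_comp_zero (Dv (j+1)) (Dv j) (fun v => (hdd' j hj _).mpr ⟨v, rfl⟩) x
  have hcommB : ∀ i j x, dhB K A r s Dh i j (dvB K A r s Dv (i+1) j x)
      = dvB K A r s Dv i j (dhB K A r s Dh i (j+1) x) :=
    fun i j x => rTensor_lTensor_comm K (Dh i) (Dv j) x
  have hsymmL : ∀ m (a : A) (x : Fin (tB r s m) → A ⊗[K] A),
      (PhiB K A r s m).symm ((lmulT K A a).compLeft _ x)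
        = LactB K A r s m a ((PhiB K A r s m).symm x) := by
    intro m a x
    apply (PhiB K A r s m).injective
    rw [LinearEquiv.apply_symm_apply, Phi_lact, LinearEquiv.apply_symm_apply]
  have hsymmR : ∀ m (b : A) (x : Fin (tB r s m) → A ⊗[K] A),
      (PhiB K A r s m).symm ((rmulT K A b).compLeft _ x)
        = RactB K A r s m b ((PhiB K A r s m).symm x) := by
    intro m b x
    apply (PhiB K A r s m).injective
    rw [LinearEquiv.apply_symm_apply, Phi_ract, LinearEquiv.apply_symm_apply]
  refine ⟨tB r s,
    fun i => (PhiB K A r s i).toLinearMap ∘ₗ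
      (totD (CB K A r s) (dhB K A r s Dh) (dvB K A r s Dv) i) ∘ₗ
      (PhiB K A r s (i+1)).symm.toLinearMap,
    (fK ∘ₗ etaB K A r s eK 0 ∘ₗ
        LinearMap.proj (R := K) (φ := fun p : TotIdx 0 => CB K A r s p.1.1 p.1.2)
          ⟨(0,0), rfl⟩) ∘ₗ (PhiB K A r s 0).symm.toLinearMap,
    ?_, ?_, ?_, ?_, ?_, ?_, ?_⟩
  · -- d equivariance, left action
    intro i a
    apply LinearMap.ext
    intro x
    simp only [LinearMap.coe_comp, Function.comp_apply, LinearEquiv.coe_coe]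
    rw [hsymmL, totD_Lact K A r s Dh Dv hDh, Phi_lact]
  · -- d equivariance, right action
    intro i b
    apply LinearMap.ext
    intro x
    simp only [LinearMap.coe_comp, Function.comp_apply, LinearEquiv.coe_coe]
    rw [hsymmR, totD_Ract K A r s Dh Dv hDv, Phi_ract]
  · -- e equivariance, left action
    intro a
    apply LinearMap.ext
    intro x
    simp only [LinearMap.coe_comp, Function.comp_apply, LinearEquiv.coe_coe,
      LinearMap.proj_apply, LinearMap.smul_apply, LinearMap.id_apply]
    rw [hsymmL]
    have : LactB K A r s 0 a ((PhiB K A r s 0).symm x) ⟨(0,0), rfl⟩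
        = lactB K A r s 0 0 a (((PhiB K A r s 0).symm x) ⟨(0,0), rfl⟩) := rfl
    rw [this, E_lact K A r s eK fK ε heq a, smul_eq_mul]
  · -- e equivariance, right action
    intro b
    apply LinearMap.ext
    intro x
    simp only [LinearMap.coe_comp, Function.comp_apply, LinearEquiv.coe_coe,
      LinearMap.proj_apply, LinearMap.smul_apply, LinearMap.id_apply]
    rw [hsymmR]
    have : RactB K A r s 0 b ((PhiB K A r s 0).symm x) ⟨(0,0), rfl⟩
        = ractB K A r s 0 0 b (((PhiB K A r s 0).symm x) ⟨(0,0), rfl⟩) := rfl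
    rw [this, E_ract K A r s eK fK ε hfq b, smul_eq_mul]
  · -- surjectivity of e
    intro c
    obtain ⟨y, hy⟩ := hfsurj c
    obtain ⟨x0, hx0⟩ := hEsurj 0 y
    refine ⟨PhiB K A r s 0 (Function.update (0 : Tot (CB K A r s) 0) ⟨(0,0), rfl⟩ x0), ?_⟩
    simp only [LinearMap.coe_comp, Function.comp_apply, LinearEquiv.coe_coe,
      LinearMap.proj_apply]
    rw [LinearEquiv.symm_apply_apply, Function.update_self, hx0, hy]
  · -- ker e = range d0
    intro hn
    ext x
    simp only [LinearMap.mem_ker, LinearMap.mem_range, LinearMap.coe_comp,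
      Function.comp_apply, LinearEquiv.coe_coe, LinearMap.proj_apply]
    constructor
    · intro hx
      obtain ⟨w, hw⟩ := totE_ker (CB K A r s) (dhB K A r s Dh) (dvB K A r s Dv)
        (fun j => Fin (s j) → A) Dv (etaB K A r s eK) K fK
        hηdv (fun u hu => (hff hn u).mp hu) (hEsurj 1) (hηex hn 0)
        ((PhiB K A r s 0).symm x) hx
      exact ⟨PhiB K A r s 1 w, by rw [LinearEquiv.symm_apply_apply, hw,
        LinearEquiv.apply_symm_apply]⟩
    · rintro ⟨y, rfl⟩
      rw [LinearEquiv.symm_apply_apply]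
      exact totE_comp (CB K A r s) (dhB K A r s Dh) (dvB K A r s Dv)
        (fun j => Fin (s j) → A) Dv (etaB K A r s eK) K fK
        hηdv (hηdh hn 0) (fun u => (hff hn _).mpr ⟨u, rfl⟩)
        ((PhiB K A r s 1).symm y)
  · -- ker d i = range d (i+1)
    intro i hi
    have hn : 0 < n := by omega
    ext x
    simp only [LinearMap.mem_ker, LinearMap.mem_range, LinearMap.coe_comp,
      Function.comp_apply, LinearEquiv.coe_coe]
    rw [LinearEquiv.map_eq_zero_iff]
    constructor
    · intro hx
      obtain ⟨w, hw⟩ := ker_totD (CB K A r s) (dhB K A r s Dh) (dvB K A r s Dv)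
        (fun j => Fin (s j) → A) Dv (etaB K A r s eK) i
        hηdv (hηdh hn i) (fun u hu => (hdd' i hi u).mp hu) (hEsurj (i+2)) (hηex hn (i+1))
        (fun i' j' h y hy => hrowex i' j' (by omega) y hy)
        hcommB (fun i' j' h x' => hdvdv0 i' j' (by omega) x')
        ((PhiB K A r s (i+1)).symm x) hx
      exact ⟨PhiB K A r s (i+2) w, by rw [LinearEquiv.symm_apply_apply, hw,
        LinearEquiv.apply_symm_apply]⟩
    · rintro ⟨y, rfl⟩
      rw [LinearEquiv.symm_apply_apply]
      exact totD_comp (CB K A r s) (dhB K A r s Dh) (dvB K A r s Dv) i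
        (fun i' j' h x' => hdhdh0 i' j' (by omega) x')
        (fun i' j' h x' => hdvdv0 i' j' (by omega) x')
        hcommB ((PhiB K A r s (i+2)).symm y)


end MainAux

/-- Let `K` be a principal ideal domain and `A` a `K`-algebra which is flat
as a `K`-module, with augmentation `ε`. If `A` is of type left-`FP n` and of type
right-`FP n`, then `A` is of type weak bi-`FP n`. -/
theorem leftFP_and_rightFP_imp_weakBiFP_of_flat
    (K : Type*) [CommRing K] [IsDomain K] [IsPrincipalIdealRing K]
    (A : Type*) [Ring A] [Algebra K A] (hflat : Module.Flat K A)
    (ε : A →ₐ[K] K) (n : ℕ)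
    (hl : LeftFP A ε.toRingHom n) (hr : RightFP A ε.toRingHom n) :
    WeakBiFP K A ε n := by
  haveI := hflat
  letI : Module A K := Module.compHom K ε.toRingHom
  letI : Module Aᵐᵒᵖ K :=
    Module.compHom K (ε.toRingHom.fromOpposite fun _ _ => mul_comm _ _)
  obtain ⟨r, d, e, hesurj, hk0, hk⟩ := hl
  obtain ⟨s, d', f, hfsurj, hk0', hk'⟩ := hr
  -- K-linearized left data
  set Dh : ∀ i, (Fin (r (i+1)) → A) →ₗ[K] (Fin (r i) → A) :=
    fun i => (d i).restrictScalars K with hDhdef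
  have heA : ∀ (a : A) (x : Fin (r 0) → A), e (a • x) = ε a * e x := by
    intro a x
    rw [map_smul]
    rfl
  set eK : (Fin (r 0) → A) →ₗ[K] K :=
    { toFun := e
      map_add' := fun x y => map_add e x y
      map_smul' := fun c x => by
        have h1 : c • x = (algebraMap K A c) • x := by
          funext k
          simp [Algebra.smul_def]
        show e (c • x) = c • e x
        rw [h1, heA, AlgHom.commutes, smul_eq_mul]
        simp } with heKdef
  have hDh : ∀ i (a : A) (x : Fin (r (i+1)) → A),
      Dh i (fun k => a * x k) = fun k => a * Dh i x k := by
    intro i a x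
    show d i (a • x) = a • d i x
    exact map_smul (d i) a x
  have heq : ∀ (a : A) (x : Fin (r 0) → A), eK (fun k => a * x k) = ε a * eK x := by
    intro a x
    show e (a • x) = ε a * e x
    exact heA a x
  have heKsurj : Function.Surjective eK := hesurj
  have hee : 0 < n → ∀ x, (eK x = 0 ↔ ∃ c, Dh 0 c = x) := by
    intro hn x
    constructor
    · intro hx
      have hx' : x ∈ LinearMap.ker e := hx
      rw [hk0 hn] at hx'
      obtain ⟨c, hc⟩ := hx'
      exact ⟨c, hc⟩
    · rintro ⟨c, rfl⟩
      have hmem : d 0 c ∈ LinearMap.ker e := by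
        rw [hk0 hn]
        exact ⟨c, rfl⟩
      exact hmem
  have hdd : ∀ i, i + 1 < n → ∀ x, (Dh i x = 0 ↔ ∃ c, Dh (i+1) c = x) := by
    intro i hi x
    constructor
    · intro hx
      have hx' : x ∈ LinearMap.ker (d i) := hx
      rw [hk i hi] at hx'
      obtain ⟨c, hc⟩ := hx'
      exact ⟨c, hc⟩
    · rintro ⟨c, rfl⟩
      have hmem : d (i+1) c ∈ LinearMap.ker (d i) := by
        rw [hk i hi]
        exact ⟨c, rfl⟩
      exact hmem
  -- K-linearized right data
  set op1 : ∀ q : ℕ, (Fin q → A) ≃ₗ[K] (Fin q → Aᵐᵒᵖ) :=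
    fun q => LinearEquiv.piCongrRight fun _ => MulOpposite.opLinearEquiv K with hop1
  set Dv : ∀ j, (Fin (s (j+1)) → A) →ₗ[K] (Fin (s j) → A) :=
    fun j => (op1 (s j)).symm.toLinearMap ∘ₗ ((d' j).restrictScalars K) ∘ₗ
      (op1 (s (j+1))).toLinearMap with hDvdef
  have hfA : ∀ (b : A) (y : Fin (s 0) → Aᵐᵒᵖ), f ((op b) • y) = ε b * f y := by
    intro b y
    rw [map_smul]
    rfl
  set fK : (Fin (s 0) → A) →ₗ[K] K :=
    { toFun := fun y => f (op1 (s 0) y)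
      map_add' := fun x y => by
        show f ((op1 (s 0)) (x + y)) = f ((op1 (s 0)) x) + f ((op1 (s 0)) y)
        rw [map_add, map_add]
      map_smul' := fun c y => by
        show f ((op1 (s 0)) (c • y)) = c • f ((op1 (s 0)) y)
        rw [map_smul]
        have h1 : c • (op1 (s 0) y) = (algebraMap K Aᵐᵒᵖ c) • (op1 (s 0) y) := by
          funext l
          simp [Algebra.smul_def]
        show f (c • (op1 (s 0) y)) = c • f (op1 (s 0) y)
        rw [h1, map_smul]
        show ε (unop (algebraMap K Aᵐᵒᵖ c)) * f (op1 (s 0) y) = c • f (op1 (s 0) y)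
        rw [MulOpposite.algebraMap_apply, unop_op, AlgHom.commutes, smul_eq_mul]
        simp } with hfKdef
  have hDv : ∀ j (b : A) (y : Fin (s (j+1)) → A),
      Dv j (fun l => y l * b) = fun l => Dv j y l * b := by
    intro j b y
    have h1 : (op1 (s (j+1))) (fun l => y l * b) = (op b) • ((op1 (s (j+1))) y) := rfl
    show (op1 (s j)).symm (d' j ((op1 (s (j+1))) (fun l => y l * b))) = _
    rw [h1, map_smul]
    rfl
  have hfq : ∀ (b : A) (y : Fin (s 0) → A), fK (fun l => y l * b) = ε b * fK y := by
    intro b y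
    show f ((op1 (s 0)) (fun l => y l * b)) = ε b * f (op1 (s 0) y)
    have h1 : (op1 (s 0)) (fun l => y l * b) = (op b) • ((op1 (s 0)) y) := rfl
    rw [h1, hfA]
  have hfKsurj : Function.Surjective fK := by
    intro c
    obtain ⟨y0, hy0⟩ := hfsurj c
    exact ⟨(op1 (s 0)).symm y0, by
      show f ((op1 (s 0)) ((op1 (s 0)).symm y0)) = c
      rw [LinearEquiv.apply_symm_apply, hy0]⟩
  have hff : 0 < n → ∀ y, (fK y = 0 ↔ ∃ c, Dv 0 c = y) := by
    intro hn y
    constructor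
    · intro hy
      have hy' : (op1 (s 0)) y ∈ LinearMap.ker f := hy
      rw [hk0' hn] at hy'
      obtain ⟨c, hc⟩ := hy'
      refine ⟨(op1 (s 1)).symm c, ?_⟩
      show (op1 (s 0)).symm (d' 0 ((op1 (s 1)) ((op1 (s 1)).symm c))) = y
      rw [LinearEquiv.apply_symm_apply, hc, LinearEquiv.symm_apply_apply]
    · rintro ⟨c, rfl⟩
      show f ((op1 (s 0)) ((op1 (s 0)).symm (d' 0 ((op1 (s 1)) c)))) = 0
      rw [LinearEquiv.apply_symm_apply]
      have hmem : d' 0 ((op1 (s 1)) c) ∈ LinearMap.ker f := by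
        rw [hk0' hn]
        exact ⟨_, rfl⟩
      exact hmem
  have hdd' : ∀ j, j + 1 < n → ∀ y, (Dv j y = 0 ↔ ∃ c, Dv (j+1) c = y) := by
    intro j hj y
    constructor
    · intro hy
      have hy0 : (op1 (s j)).symm (d' j ((op1 (s (j+1))) y)) = 0 := hy
      have hy' : (op1 (s (j+1))) y ∈ LinearMap.ker (d' j) := by
        have := (LinearEquiv.map_eq_zero_iff (op1 (s j)).symm).mp hy0
        exact this
      rw [hk' j hj] at hy'
      obtain ⟨c, hc⟩ := hy'
      refine ⟨(op1 (s (j+2))).symm c, ?_⟩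
      show (op1 (s (j+1))).symm (d' (j+1) ((op1 (s (j+2))) ((op1 (s (j+2))).symm c))) = y
      rw [LinearEquiv.apply_symm_apply, hc, LinearEquiv.symm_apply_apply]
    · rintro ⟨c, rfl⟩
      show (op1 (s j)).symm
          (d' j ((op1 (s (j+1))) ((op1 (s (j+1))).symm (d' (j+1) ((op1 (s (j+2))) c))))) = 0
      rw [LinearEquiv.apply_symm_apply]
      have hmem : d' (j+1) ((op1 (s (j+2))) c) ∈ LinearMap.ker (d' j) := by
        rw [hk' j hj]
        exact ⟨_, rfl⟩
      rw [hmem, map_zero]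
  exact main_aux ε n r Dh eK s Dv fK hDh heq hDv hfq heKsurj hfKsurj hee hff hdd hdd'
end
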